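/- arXiv:1308.4260 — 3 statements merged into one kernel-verified Lean document; each statement's English description precedes it below -/
import Mathlib

section
/- Let S be a uniformly recurrent tree set over a finite alphabet A with A ⊆ S. Then for any w in S, the set R_S(w) of first right return words to w is a basis of the free group F_A on A. -/
open List

/-- `u` is a factor of `v`. -/
def IsFactor {A : Type*} (u v : List A) : Prop := ∃ p s : List A, v = p ++ u ++ s

/-- A set of words is factorial if it contains the factors of its elements. -/
def Factorial {A : Type*} (S : Set (List A)) : Prop :=
  ∀ v ∈ S, ∀ u : List A, IsFactor u v → u ∈ S

/-- Left extensions of `w` in `S` taken inside the set `U`. -/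
def leftExts {A : Type*} (S U : Set (List A)) (w : List A) : Set (List A) :=
  {l | l ∈ U ∧ l ++ w ∈ S}

/-- Right extensions of `w` in `S` taken inside the set `V`. -/
def rightExts {A : Type*} (S V : Set (List A)) (w : List A) : Set (List A) :=
  {r | r ∈ V ∧ w ++ r ∈ S}

/-- The generalized extension graph `E_{U,V}(w)`: a bipartite undirected graph on the
disjoint union of `U(w)` and `V(w)`, with an edge between `l` and `r` iff `l ++ w ++ r ∈ S`. -/
def ExtGraph {A : Type*} (S U V : Set (List A)) (w : List A) :
    SimpleGraph (↥(leftExts S U w) ⊕ ↥(rightExts S V w)) where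
  Adj x y :=
    (∃ l r, x = Sum.inl l ∧ y = Sum.inr r ∧ l.val ++ w ++ r.val ∈ S) ∨
    (∃ l r, x = Sum.inr r ∧ y = Sum.inl l ∧ l.val ++ w ++ r.val ∈ S)
  symm := by
    constructor
    rintro x y (⟨l, r, hx, hy, h⟩ | ⟨l, r, hx, hy, h⟩)
    · exact Or.inr ⟨l, r, hy, hx, h⟩
    · exact Or.inl ⟨l, r, hy, hx, h⟩
  loopless := by
    constructor
    rintro x (⟨l, r, hx, hy, _⟩ | ⟨l, r, hx, hy, _⟩) <;> subst hx <;> simp at hy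

/-- The set of one-letter words. -/
def letterWords (A : Type*) : Set (List A) := Set.range fun a : A => [a]

/-- The extension graph `E(w)` of `w` in `S` (extensions by letters). -/
def EGraph {A : Type*} (S : Set (List A)) (w : List A) :=
  ExtGraph S (letterWords A) (letterWords A) w

/-- `S` is biextendable: factorial and every word extends on both sides by a letter. -/
def Biext {A : Type*} (S : Set (List A)) : Prop :=
  Factorial S ∧ ∀ w ∈ S, ∃ a b : A, a :: (w ++ [b]) ∈ S

/-- `S` is an acyclic set. -/
def SAcyclic {A : Type*} (S : Set (List A)) : Prop :=
  Biext S ∧ ∀ w ∈ S, (EGraph S w).IsAcyclic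

/-- `S` is a connected set. -/
def SConn {A : Type*} (S : Set (List A)) : Prop :=
  Biext S ∧ ∀ w ∈ S, (EGraph S w).Connected

/-- `S` is a tree set. -/
def STree {A : Type*} (S : Set (List A)) : Prop :=
  Biext S ∧ ∀ w ∈ S, (EGraph S w).IsTree

/-- A prefix code: nonempty words, none a proper prefix of another. -/
def IsPrefixCode {A : Type*} (X : Set (List A)) : Prop :=
  (∀ x ∈ X, x ≠ []) ∧ ∀ x ∈ X, ∀ y ∈ X, x <+: y → x = y

/-- A suffix code: nonempty words, none a proper suffix of another. -/
def IsSuffixCode {A : Type*} (X : Set (List A)) : Prop :=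
  (∀ x ∈ X, x ≠ []) ∧ ∀ x ∈ X, ∀ y ∈ X, x <:+ y → x = y

/-- A bifix code. -/
def IsBifixCode {A : Type*} (X : Set (List A)) : Prop :=
  IsPrefixCode X ∧ IsSuffixCode X

/-- An `S`-maximal prefix code. -/
def IsSMaxPrefixCode {A : Type*} (S X : Set (List A)) : Prop :=
  IsPrefixCode X ∧ X ⊆ S ∧ ∀ Y : Set (List A), IsPrefixCode Y → Y ⊆ S → X ⊆ Y → X = Y

/-- An `S`-maximal suffix code. -/
def IsSMaxSuffixCode {A : Type*} (S X : Set (List A)) : Prop :=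
  IsSuffixCode X ∧ X ⊆ S ∧ ∀ Y : Set (List A), IsSuffixCode Y → Y ⊆ S → X ⊆ Y → X = Y

/-- An `S`-maximal bifix code. -/
def IsSMaxBifixCode {A : Type*} (S X : Set (List A)) : Prop :=
  IsBifixCode X ∧ X ⊆ S ∧ ∀ Y : Set (List A), IsBifixCode Y → Y ⊆ S → X ⊆ Y → X = Y

/-- The canonical embedding of words over `A` into the free group `F_A`. -/
def toFG {A : Type*} (w : List A) : FreeGroup A := (w.map FreeGroup.of).prod

/-- A subset of a group is free if it is a basis of the subgroup it generates, i.e. the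
induced morphism from the free group over it is injective. -/
def IsFreeSubset {G : Type*} [Group G] (X : Set G) : Prop :=
  Function.Injective ⇑(FreeGroup.lift fun x : X => (x : G))

/-- The submonoid `X*` of `A*` generated by `X`, as a set of words. -/
def star {A : Type*} (X : Set (List A)) : Set (List A) :=
  {w | ∃ l : List (List A), (∀ u ∈ l, u ∈ X) ∧ w = l.flatten}

/-- Every word of `S` is right-extendable by a letter. -/
def RightExtendable {A : Type*} (S : Set (List A)) : Prop :=
  ∀ w ∈ S, ∃ a : A, w ++ [a] ∈ S

/-- `S` is uniformly recurrent. -/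
def UnifRecurrent {A : Type*} (S : Set (List A)) : Prop :=
  RightExtendable S ∧
    ∀ u ∈ S, ∃ n : ℕ, 1 ≤ n ∧ ∀ v ∈ S, v.length = n → IsFactor u v

/-- `S` is recurrent. -/
def Recurrent {A : Type*} (S : Set (List A)) : Prop :=
  S ≠ {([] : List A)} ∧ Factorial S ∧ ∀ u ∈ S, ∀ w ∈ S, ∃ v ∈ S, u ++ v ++ w ∈ S

/-- The set `Γ_S(w)` of right return words to `w`. -/
def retWords {A : Type*} (S : Set (List A)) (w : List A) : Set (List A) :=
  {x | x ∈ S ∧ w ++ x ∈ S ∧ ∃ y : List A, y ≠ [] ∧ w ++ x = y ++ w}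

/-- The set `R_S(w)` of first right return words to `w`. -/
def firstRet {A : Type*} (S : Set (List A)) (w : List A) : Set (List A) :=
  {x | x ∈ retWords S w ∧ ¬ ∃ y ∈ retWords S w, ∃ z : List A, z ≠ [] ∧ x = y ++ z}

/-- The quantity `m(w) = e(w) - l(w) - r(w) + 1`. -/
noncomputable def mval {A : Type*} (S : Set (List A)) (w : List A) : ℤ :=
  (Set.ncard {p : A × A | p.1 :: (w ++ [p.2]) ∈ S} : ℤ)
    - (Set.ncard {a : A | a :: w ∈ S} : ℤ) - (Set.ncard {b : A | w ++ [b] ∈ S} : ℤ) + 1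

/-- A strong set: factorial and every word is strong or neutral. -/
def SStrong {A : Type*} (S : Set (List A)) : Prop :=
  Factorial S ∧ ∀ w ∈ S, 0 ≤ mval S w

/-- A weak set: factorial and every word is weak or neutral. -/
def SWeak {A : Type*} (S : Set (List A)) : Prop :=
  Factorial S ∧ ∀ w ∈ S, mval S w ≤ 0

/-- A neutral set: factorial and every word is neutral. -/
def SNeutral {A : Type*} (S : Set (List A)) : Prop :=
  Factorial S ∧ ∀ w ∈ S, mval S w = 0

section Basics

variable {A : Type*}

theorem isFactor_iff_infix {u v : List A} : IsFactor u v ↔ u <:+: v := by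
  constructor
  · rintro ⟨p, s, rfl⟩; exact ⟨p, s, rfl⟩
  · rintro ⟨p, s, rfl⟩; exact ⟨p, s, rfl⟩

theorem mem_of_infix {S : Set (List A)} (hfac : Factorial S) {u v : List A}
    (hv : v ∈ S) (h : u <:+: v) : u ∈ S :=
  hfac v hv u (isFactor_iff_infix.2 h)

theorem mem_of_suffix {S : Set (List A)} (hfac : Factorial S) {u v : List A}
    (hv : v ∈ S) (h : u <:+ v) : u ∈ S := mem_of_infix hfac hv h.isInfix

theorem mem_of_prefix {S : Set (List A)} (hfac : Factorial S) {u v : List A}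
    (hv : v ∈ S) (h : u <+: v) : u ∈ S := mem_of_infix hfac hv h.isInfix

theorem nil_mem_S {S : Set (List A)} (hfac : Factorial S) {v : List A} (hv : v ∈ S) :
    ([] : List A) ∈ S := mem_of_prefix hfac hv (List.nil_prefix)

/-- extend a word on the right by k letters -/
theorem exists_right_ext {S : Set (List A)} (hre : RightExtendable S) {v : List A}
    (hv : v ∈ S) (k : ℕ) : ∃ u : List A, v ++ u ∈ S ∧ u.length = k := by
  induction k with
  | zero => exact ⟨[], by simpa using hv, rfl⟩
  | succ k ih =>
      obtain ⟨u, hu, hlen⟩ := ih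
      obtain ⟨a, ha⟩ := hre _ hu
      exact ⟨u ++ [a], by simpa [List.append_assoc] using ha, by simp [hlen]⟩

theorem exists_word_of_length {S : Set (List A)} (hfac : Factorial S)
    (hre : RightExtendable S) {v : List A} (hv : v ∈ S) (k : ℕ) :
    ∃ u ∈ S, (u : List A).length = k := by
  obtain ⟨u, hu, hlen⟩ := exists_right_ext hre (nil_mem_S hfac hv) k
  exact ⟨u, by simpa using hu, hlen⟩

/-- a word is a factor of every long enough word, given it is a factor of every word
of length exactly n -/
theorem infix_of_long {S : Set (List A)} (hfac : Factorial S) {w : List A} {n : ℕ}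
    (hn : ∀ v ∈ S, (v : List A).length = n → IsFactor w v)
    {v : List A} (hv : v ∈ S) (hlen : n ≤ v.length) : w <:+: v := by
  have hsuf : v.drop (v.length - n) <:+ v := List.drop_suffix _ _
  have hmem : v.drop (v.length - n) ∈ S := mem_of_suffix hfac hv hsuf
  have hlen' : (v.drop (v.length - n)).length = n := by
    simp [List.length_drop]; omega
  exact (isFactor_iff_infix.1 (hn _ hmem hlen')).trans hsuf.isInfix

theorem suffix_of_suffix_le {l₁ l₂ l : List A} (h₁ : l₁ <:+ l) (h₂ : l₂ <:+ l)
    (hle : l₁.length ≤ l₂.length) : l₁ <:+ l₂ := by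
  obtain ⟨p, hp⟩ := h₁
  obtain ⟨q, hq⟩ := h₂
  have hpq : q.length ≤ p.length := by
    have e1 : p.length + l₁.length = l.length := by rw [← hp]; simp
    have e2 : q.length + l₂.length = l.length := by rw [← hq]; simp
    omega
  refine ⟨p.drop q.length, ?_⟩
  have : (p ++ l₁).drop q.length = l₂ := by rw [hp, ← hq]; simp
  rw [← this, List.drop_append]
  have : q.length - p.length = 0 := by omega
  rw [this]; simp

end Basics

section ToFG

variable {A : Type*}

theorem toFG_nil : toFG ([] : List A) = 1 := rfl

theorem toFG_append (u v : List A) : toFG (u ++ v) = toFG u * toFG v := by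
  simp [toFG]

theorem toFG_singleton (a : A) : toFG [a] = FreeGroup.of a := by
  simp [toFG]

end ToFG
section Occurrences

variable {A : Type*}

/-- The end position of the last occurrence of `w` in `v` (junk if no occurrence). -/
noncomputable def lastEnd (w v : List A) : ℕ :=
  @Nat.findGreatest (fun e => w <:+ v.take e) (Classical.decPred _) v.length

theorem lastEnd_le (w v : List A) : lastEnd w v ≤ v.length := by
  unfold lastEnd; exact @Nat.findGreatest_le (fun e => w <:+ v.take e) (Classical.decPred _) v.length

theorem occ_of_infix {w v : List A} (h : w <:+: v) :
    ∃ e ≤ v.length, w <:+ v.take e := by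
  obtain ⟨p, s, rfl⟩ := h
  refine ⟨(p ++ w).length, by simp, ?_⟩
  rw [show p ++ w ++ s = (p ++ w) ++ s from rfl, List.take_left]
  exact ⟨p, rfl⟩

theorem lastEnd_spec {w v : List A} (h : ∃ e ≤ v.length, w <:+ v.take e) :
    w <:+ v.take (lastEnd w v) := by
  unfold lastEnd
  obtain ⟨e, he, hocc⟩ := h
  exact @Nat.findGreatest_spec e (fun e => w <:+ v.take e) (Classical.decPred _) v.length he hocc

theorem lastEnd_greatest {w v : List A} {e : ℕ} (h1 : lastEnd w v < e)
    (h2 : e ≤ v.length) : ¬ w <:+ v.take e := by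
  unfold lastEnd at h1
  exact @Nat.findGreatest_is_greatest e (fun e => w <:+ v.take e) (Classical.decPred _) v.length h1 h2

theorem lastEnd_eq_length {w v : List A} (h : w <:+ v) : lastEnd w v = v.length := by
  refine le_antisymm (lastEnd_le w v) ?_
  unfold lastEnd
  exact @Nat.le_findGreatest v.length (fun e => w <:+ v.take e) (Classical.decPred _) v.length le_rfl (by simpa using h)

theorem length_le_lastEnd {w v : List A} (h : ∃ e ≤ v.length, w <:+ v.take e) :
    w.length ≤ lastEnd w v := by
  have hocc := lastEnd_spec h
  calc w.length ≤ (v.take (lastEnd w v)).length := hocc.length_le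
    _ ≤ lastEnd w v := by simp

theorem infix_of_occ {w v : List A} {e : ℕ} (hocc : w <:+ v.take e) : w <:+: v :=
  hocc.isInfix.trans (List.take_prefix _ _).isInfix

/-- the word `w ++ v.drop (lastEnd w v)` is a suffix of `v`, when `w` occurs in `v`. -/
theorem suffix_lastEnd {w v : List A} (h : ∃ e ≤ v.length, w <:+ v.take e) :
    w ++ v.drop (lastEnd w v) <:+ v := by
  obtain ⟨q, hq⟩ := lastEnd_spec h
  have hv : v = v.take (lastEnd w v) ++ v.drop (lastEnd w v) := by simp
  refine ⟨q, ?_⟩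
  conv_rhs => rw [hv, ← hq]
  simp

end Occurrences

section ReturnWords

variable {A : Type*} {S : Set (List A)} {w : List A}

theorem retWords_ne_nil {x : List A} (hx : x ∈ retWords S w) : x ≠ [] := by
  obtain ⟨-, -, y, hy, hxy⟩ := hx
  intro h
  subst h
  rw [List.append_nil] at hxy
  apply hy
  have := congrArg List.length hxy
  simp only [List.length_append] at this
  exact List.eq_nil_of_length_eq_zero (by omega)

theorem retWords_suffix {x : List A} (hx : x ∈ retWords S w) : w <:+ w ++ x := by
  obtain ⟨-, -, y, hy, hxy⟩ := hx
  exact ⟨y, hxy.symm⟩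

/-- A return word which is not a first return word decomposes into two shorter return
words. -/
theorem retWords_decomp (hfac : Factorial S) {x : List A} (hx : x ∈ retWords S w)
    (hnx : x ∉ firstRet S w) :
    ∃ y z : List A, y ∈ retWords S w ∧ z ∈ retWords S w ∧ y ≠ [] ∧ z ≠ [] ∧
      x = y ++ z := by
  have hne : ¬ ¬ ∃ y ∈ retWords S w, ∃ z : List A, z ≠ [] ∧ x = y ++ z := by
    intro h; exact hnx ⟨hx, h⟩
  obtain ⟨y, hy, z, hz, hxyz⟩ := not_not.1 hne
  refine ⟨y, z, hy, ?_, retWords_ne_nil hy, hz, hxyz⟩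
  obtain ⟨hxS, hwxS, hxw⟩ := hx
  obtain ⟨hyS, hwyS, y', hy', hyy'⟩ := hy
  -- w ++ z is a suffix of w ++ x
  have hsuf : w ++ z <:+ w ++ x := by
    refine ⟨y', ?_⟩
    rw [hxyz, ← List.append_assoc, ← hyy', List.append_assoc]
  have hzS : z ∈ S := mem_of_suffix hfac hxS ⟨y, hxyz.symm⟩
  have hwzS : w ++ z ∈ S := mem_of_suffix hfac hwxS hsuf
  have hwsuf : w <:+ w ++ z := by
    refine suffix_of_suffix_le ?_ hsuf (by simp)
    exact retWords_suffix ⟨hxS, hwxS, hxw⟩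
  obtain ⟨y₃, hy₃⟩ := hwsuf
  refine ⟨hzS, hwzS, y₃, ?_, hy₃.symm⟩
  intro h
  subst h
  rw [List.nil_append] at hy₃
  apply hz
  have := congrArg List.length hy₃
  simp only [List.length_append] at this
  exact List.eq_nil_of_length_eq_zero (by omega)

theorem toFG_retWords_mem_closure_aux (hfac : Factorial S) :
    ∀ n : ℕ, ∀ x ∈ retWords S w, x.length = n →
      toFG x ∈ Subgroup.closure (toFG '' firstRet S w) := by
  intro n
  induction n using Nat.strong_induction_on with
  | _ n ih =>
    intro x hx hlen
    by_cases hfr : x ∈ firstRet S w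
    · exact Subgroup.subset_closure ⟨x, hfr, rfl⟩
    · obtain ⟨y, z, hy, hz, hyne, hzne, rfl⟩ := retWords_decomp hfac hx hfr
      rw [toFG_append]
      have h1 : 0 < y.length := List.length_pos_iff.2 hyne
      have h2 : 0 < z.length := List.length_pos_iff.2 hzne
      have h3 : (y ++ z).length = y.length + z.length := by simp
      exact mul_mem (ih y.length (by omega) y hy rfl) (ih z.length (by omega) z hz rfl)

theorem toFG_retWords_mem_closure (hfac : Factorial S) {x : List A}
    (hx : x ∈ retWords S w) :
    toFG x ∈ Subgroup.closure (toFG '' firstRet S w) :=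
  toFG_retWords_mem_closure_aux hfac x.length x hx rfl

end ReturnWords
section Groupoid

variable {A : Type*} {S : Set (List A)}

/-- A Rauzy-graph edge step at level `n`. -/
def GStep (S : Set (List A)) (n : ℕ) (u : List A) (a : A) (v : List A) : Prop :=
  u.length = n ∧ u ++ [a] ∈ S ∧ v = (u ++ [a]).tail

/-- Generalized paths in the Rauzy graph of order `n`, with labels in the free group. -/
inductive GPath (S : Set (List A)) (n : ℕ) : List A → FreeGroup A → List A → Prop
  | refl (u : List A) (hu : u ∈ S) (hlen : u.length = n) : GPath S n u 1 u
  | fwd {u : List A} {g : FreeGroup A} {v : List A} (a : A) {v' : List A}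
      (h : GPath S n u g v) (hs : GStep S n v a v') : GPath S n u (g * FreeGroup.of a) v'
  | bwd {u : List A} {g : FreeGroup A} {v : List A} (a : A) {v' : List A}
      (h : GPath S n u g v) (hs : GStep S n v' a v) :
      GPath S n u (g * (FreeGroup.of a)⁻¹) v'

theorem GStep.tgt_mem (hfac : Factorial S) {n : ℕ} {u : List A} {a : A} {v : List A}
    (hs : GStep S n u a v) : v ∈ S ∧ v.length = n := by
  obtain ⟨hlen, hmem, rfl⟩ := hs
  refine ⟨mem_of_suffix hfac hmem (List.tail_suffix _), ?_⟩
  simp [List.length_tail, hlen]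

theorem GStep.src_mem (hfac : Factorial S) {n : ℕ} {u : List A} {a : A} {v : List A}
    (hs : GStep S n u a v) : u ∈ S ∧ u.length = n :=
  ⟨mem_of_prefix hfac hs.2.1 ⟨[a], rfl⟩, hs.1⟩

theorem GPath.src_mem (hfac : Factorial S) {n : ℕ} {u g v} (hp : GPath S n u g v) :
    u ∈ S ∧ u.length = n := by
  induction hp with
  | refl hu hlen => exact ⟨hu, hlen⟩
  | fwd a h hs ih => exact ih
  | bwd a h hs ih => exact ih

theorem GPath.dst_mem (hfac : Factorial S) {n : ℕ} {u g v} (hp : GPath S n u g v) :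
    v ∈ S ∧ v.length = n := by
  induction hp with
  | refl hu hlen => exact ⟨hu, hlen⟩
  | fwd a h hs _ => exact hs.tgt_mem hfac
  | bwd a h hs _ => exact hs.src_mem hfac

theorem GPath.comp {n : ℕ} {u g v h x} (h1 : GPath S n u g v) (h2 : GPath S n v h x) :
    GPath S n u (g * h) x := by
  induction h2 with
  | refl hu hlen => simpa using h1
  | fwd a h hs ih => rw [← mul_assoc]; exact GPath.fwd a ih hs
  | bwd a h hs ih => rw [← mul_assoc]; exact GPath.bwd a ih hs

theorem GPath.inv (hfac : Factorial S) {n : ℕ} {u g v} (hp : GPath S n u g v) :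
    GPath S n v g⁻¹ u := by
  induction hp with
  | refl hu hlen => simpa using GPath.refl (S := S) _ hu hlen
  | fwd a h hs ih =>
      have hv' := GStep.tgt_mem hfac hs
      have step := GPath.bwd a (GPath.refl _ hv'.1 hv'.2) hs
      have h2 := step.comp ih
      simpa [mul_inv_rev] using h2
  | bwd a h hs ih =>
      have hv' := GStep.src_mem hfac hs
      have step := GPath.fwd a (GPath.refl _ hv'.1 hv'.2) hs
      have h2 := step.comp ih
      simpa [mul_inv_rev] using h2

end Groupoid

section FiberMove

variable {A : Type*} {S : Set (List A)}

/-- Any two words in the fiber over `u` are joined by a generalized path with trivial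
label, thanks to connectedness of the extension graph of `u`. -/
theorem fiberMove (hfac : Factorial S)
    (hconn : ∀ u ∈ S, (EGraph S u).Connected)
    {n : ℕ} {u x y : List A} (hu : u ∈ S) (hun : u.length = n)
    (hx : x ∈ S) (hxl : x.length = n + 1) (hxt : x.tail = u)
    (hy : y ∈ S) (hyl : y.length = n + 1) (hyt : y.tail = u) :
    GPath S (n + 1) x 1 y := by
  classical
  set V := (↥(leftExts S (letterWords A) u) ⊕ ↥(rightExts S (letterWords A) u))
  let pos : V → List A := Sum.elim (fun l => l.val ++ u) (fun r => u ++ r.val)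
  let wt : V → FreeGroup A := Sum.elim (fun _ => 1) (fun r => toFG r.val)
  have hpos : ∀ p : V, pos p ∈ S ∧ (pos p).length = n + 1 := by
    rintro (l | r)
    · obtain ⟨⟨a, ha⟩, hmem⟩ := l.property
      refine ⟨hmem, ?_⟩
      simp only [pos, Sum.elim_inl]
      have ha' : (l : List A) = [a] := ha.symm
      rw [ha']
      simp [hun]
    · obtain ⟨⟨a, ha⟩, hmem⟩ := r.property
      refine ⟨hmem, ?_⟩
      simp only [pos, Sum.elim_inr]
      have ha' : (r : List A) = [a] := ha.symm
      rw [ha']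
      simp [hun]
  have hadj : ∀ p q : V, (EGraph S u).Adj p q →
      GPath S (n + 1) (pos p) ((wt p)⁻¹ * wt q) (pos q) := by
    rintro p q (⟨l, r, rfl, rfl, hmem⟩ | ⟨l, r, rfl, rfl, hmem⟩)
    · obtain ⟨b0, hb0⟩ := l.property.1
      obtain ⟨c0, hc0⟩ := r.property.1
      have hb : (l : List A) = [b0] := hb0.symm
      have hc : (r : List A) = [c0] := hc0.symm
      have hmem' : ((l : List A) ++ u) ++ [c0] ∈ S := by rw [← hc]; exact hmem
      have hstep : GStep S (n + 1) ((l : List A) ++ u) c0 (u ++ (r : List A)) := by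
        refine ⟨?_, hmem', ?_⟩
        · rw [hb]; simp [hun]
        · rw [hb, hc]; simp
      have h0 := GPath.fwd c0 (GPath.refl (S := S) ((l : List A) ++ u)
        (hpos (Sum.inl l)).1 (hpos (Sum.inl l)).2) hstep
      simp only [pos, wt, Sum.elim_inl, Sum.elim_inr, inv_one, one_mul]
      rw [show toFG (r : List A) = FreeGroup.of c0 by rw [hc, toFG_singleton]]
      simpa using h0
    · obtain ⟨b0, hb0⟩ := l.property.1
      obtain ⟨c0, hc0⟩ := r.property.1
      have hb : (l : List A) = [b0] := hb0.symm
      have hc : (r : List A) = [c0] := hc0.symm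
      have hmem' : ((l : List A) ++ u) ++ [c0] ∈ S := by rw [← hc]; exact hmem
      have hstep : GStep S (n + 1) ((l : List A) ++ u) c0 (u ++ (r : List A)) := by
        refine ⟨?_, hmem', ?_⟩
        · rw [hb]; simp [hun]
        · rw [hb, hc]; simp
      have h0 := GPath.bwd c0 (GPath.refl (S := S) (u ++ (r : List A))
        (hpos (Sum.inr r)).1 (hpos (Sum.inr r)).2) hstep
      simp only [pos, wt, Sum.elim_inl, Sum.elim_inr, mul_one]
      rw [show toFG (r : List A) = FreeGroup.of c0 by rw [hc, toFG_singleton]]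
      simpa using h0
  have hwalk : ∀ p q : V, (EGraph S u).Walk p q →
      GPath S (n + 1) (pos p) ((wt p)⁻¹ * wt q) (pos q) := by
    intro p q wk
    induction wk with
    | nil =>
        simpa using GPath.refl (S := S) (pos _) (hpos _).1 (hpos _).2
    | cons h rest ih =>
        have h1 := hadj _ _ h
        have h2 := h1.comp ih
        have heq : ∀ g1 g2 g3 : FreeGroup A,
            g1⁻¹ * g2 * (g2⁻¹ * g3) = g1⁻¹ * g3 := by intro g1 g2 g3; group
        rw [heq] at h2
        exact h2
  have hxne : x ≠ [] := by intro h; rw [h] at hxl; simp at hxl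
  have hyne : y ≠ [] := by intro h; rw [h] at hyl; simp at hyl
  have hxeq : [x.head hxne] ++ u = x := by
    rw [← hxt]; exact List.cons_head_tail hxne
  have hyeq : [y.head hyne] ++ u = y := by
    rw [← hyt]; exact List.cons_head_tail hyne
  have hxmem : [x.head hxne] ++ u ∈ S := by rw [hxeq]; exact hx
  have hymem : [y.head hyne] ++ u ∈ S := by rw [hyeq]; exact hy
  let px : V := Sum.inl ⟨[x.head hxne], ⟨x.head hxne, rfl⟩, hxmem⟩
  let py : V := Sum.inl ⟨[y.head hyne], ⟨y.head hyne, rfl⟩, hymem⟩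
  obtain ⟨wk⟩ := ((hconn u hu).preconnected px py)
  have hfin := hwalk px py wk
  simp only [px, py, pos, wt, Sum.elim_inl, inv_one, one_mul] at hfin
  rw [hxeq, hyeq] at hfin
  exact hfin

end FiberMove
section Lifting

variable {A : Type*} {S : Set (List A)}

/-- Lifting generalized paths from level `n` to level `n+1`. -/
theorem gpath_lift (hfac : Factorial S)
    (hconn : ∀ u ∈ S, (EGraph S u).Connected)
    (hbie : ∀ v ∈ S, ∃ a b : A, a :: (v ++ [b]) ∈ S)
    {n : ℕ} {u : List A} {g : FreeGroup A} {v : List A} (hp : GPath S n u g v) :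
    ∀ x : List A, x ∈ S → x.length = n + 1 → x.tail = u →
      ∃ y : List A, y ∈ S ∧ y.length = n + 1 ∧ y.tail = v ∧ GPath S (n + 1) x g y := by
  induction hp with
  | refl hu hlen =>
      intro x hxS hxl hxt
      exact ⟨x, hxS, hxl, hxt, GPath.refl x hxS hxl⟩
  | @fwd g' v' a v'' h hs ih =>
      intro x hxS hxl hxt
      obtain ⟨y, hyS, hyl, hyt, hpy⟩ := ih x hxS hxl hxt
      obtain ⟨hvl, hvaS, hv''⟩ := hs
      have hvS : v' ∈ S := mem_of_prefix hfac hvaS ⟨[a], rfl⟩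
      obtain ⟨d, e, hde⟩ := hbie (v' ++ [a]) hvaS
      have hdva : d :: (v' ++ [a]) ∈ S :=
        mem_of_prefix hfac hde ⟨[e], by simp⟩
      have hdvS : d :: v' ∈ S :=
        mem_of_prefix hfac hdva ⟨[a], by simp⟩
      have hmove : GPath S (n + 1) y 1 (d :: v') := by
        refine fiberMove hfac hconn hvS hvl hyS hyl hyt hdvS (by simp [hvl]) rfl
      have hstep : GStep S (n + 1) (d :: v') a (v' ++ [a]) := by
        refine ⟨by simp [hvl], by simpa using hdva, by simp⟩
      have hfin := (hpy.comp hmove).fwd a hstep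
      refine ⟨v' ++ [a], hvaS, by simp [hvl], hv''.symm, ?_⟩
      simpa using hfin
  | @bwd g' v' a v'' h hs ih =>
      intro x hxS hxl hxt
      obtain ⟨y, hyS, hyl, hyt, hpy⟩ := ih x hxS hxl hxt
      -- hs : GStep S n v'' a v' , i.e. v''++[a] ∈ S, v' = (v''++[a]).tail
      obtain ⟨hvl, hvaS, hv'⟩ := hs
      obtain ⟨d, e, hde⟩ := hbie (v'' ++ [a]) hvaS
      have hdva : d :: (v'' ++ [a]) ∈ S :=
        mem_of_prefix hfac hde ⟨[e], by simp⟩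
      have hdvS : d :: v'' ∈ S :=
        mem_of_prefix hfac hdva ⟨[a], by simp⟩
      have hvmem : v' ∈ S ∧ v'.length = n := GStep.tgt_mem hfac ⟨hvl, hvaS, hv'⟩
      have hmove : GPath S (n + 1) y 1 (v'' ++ [a]) := by
        refine fiberMove hfac hconn hvmem.1 hvmem.2 hyS hyl hyt hvaS (by simp [hvl]) ?_
        rw [hv']
      have hstep : GStep S (n + 1) (d :: v'') a (v'' ++ [a]) := by
        refine ⟨by simp [hvl], by simpa using hdva, by simp⟩
      have hback : GPath S (n + 1) (v'' ++ [a]) (1 * (FreeGroup.of a)⁻¹) (d :: v'') :=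
        GPath.bwd a (GPath.refl _ hvaS (by simp [hvl])) hstep
      have hfin := (hpy.comp hmove).comp hback
      refine ⟨d :: v'', hdvS, by simp [hvl], rfl, ?_⟩
      have heq : g' * 1 * (1 * (FreeGroup.of a)⁻¹) = g' * (FreeGroup.of a)⁻¹ := by group
      rwa [heq] at hfin

/-- The group of generalized closed paths at any vertex of any Rauzy graph is everything. -/
theorem gpath_full (hfac : Factorial S)
    (hconn : ∀ u ∈ S, (EGraph S u).Connected)
    (hbie : ∀ v ∈ S, ∃ a b : A, a :: (v ++ [b]) ∈ S)
    (hA : ∀ a : A, [a] ∈ S) :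
    ∀ n : ℕ, ∀ u : List A, u ∈ S → u.length = n → ∀ g : FreeGroup A, GPath S n u g u := by
  intro n
  induction n with
  | zero =>
      intro u hu hlen g
      have : u = [] := List.eq_nil_of_length_eq_zero hlen
      subst this
      induction g using FreeGroup.induction_on with
      | C1 => exact GPath.refl [] hu rfl
      | of a =>
          have hstep : GStep S 0 [] a [] := ⟨rfl, by simpa using hA a, by simp⟩
          have := GPath.fwd a (GPath.refl (S := S) [] hu rfl) hstep
          simpa [FreeGroup.of] using this
      | inv_of a ha => exact (GPath.inv hfac ha)
      | mul g1 g2 h1 h2 => exact h1.comp h2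
  | succ n ihn =>
      intro x hx hlen g
      have htS : x.tail ∈ S := mem_of_suffix hfac hx (List.tail_suffix x)
      have htl : x.tail.length = n := by simp [List.length_tail, hlen]
      obtain ⟨y, hyS, hyl, hyt, hpy⟩ := gpath_lift hfac hconn hbie
        (ihn x.tail htS htl g) x hx hlen rfl
      have hmove : GPath S (n + 1) y 1 x :=
        fiberMove hfac hconn htS htl hyS hyl hyt hx hlen rfl
      simpa using hpy.comp hmove

end Lifting
section Transfer

variable {A : Type*} {S : Set (List A)} {w : List A}

/-- The prefix of `v` before the last occurrence of `w`, as a free group element. -/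
noncomputable def phiw (w v : List A) : FreeGroup A := toFG (v.drop (lastEnd w v))

theorem le_lastEnd {v : List A} {e : ℕ} (he : e ≤ v.length) (h : w <:+ v.take e) :
    e ≤ lastEnd w v := by
  unfold lastEnd
  exact @Nat.le_findGreatest e (fun e => w <:+ v.take e) (Classical.decPred _) v.length he h

theorem phiw_of_suffix {v : List A} (h : w <:+ v) : phiw w v = 1 := by
  unfold phiw
  rw [lastEnd_eq_length h, List.drop_length, toFG_nil]

theorem suffix_drop {l : List A} (h : w <:+ l) {k : ℕ} (hk : k + w.length ≤ l.length) :
    w <:+ l.drop k := by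
  obtain ⟨q, rfl⟩ := h
  rw [List.drop_append]
  have hlen : q.length + w.length = (q ++ w).length := by simp
  have h1 : k - q.length = 0 := by omega
  rw [h1, List.drop_zero]
  exact List.suffix_append _ _

/-- The key step lemma: along one Rauzy graph edge, the φ-discrepancy is a return word. -/
theorem phi_step (hfac : Factorial S)
    {n₁ : ℕ} (hlong : ∀ v ∈ S, n₁ ≤ v.length → w <:+: v)
    {n : ℕ} (hn : n₁ ≤ n)
    {u : List A} {a : A} {v' : List A} (hs : GStep S n u a v') :
    phiw w u * FreeGroup.of a * (phiw w v')⁻¹ ∈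
      Subgroup.closure (toFG '' firstRet S w) := by
  obtain ⟨hul, hTS, hv'⟩ := hs
  set T := u ++ [a] with hT
  have hTl : T.length = n + 1 := by simp [hT, hul]
  have huS : u ∈ S := mem_of_prefix hfac hTS ⟨[a], rfl⟩
  have hv'eq : v' = T.drop 1 := by rw [hv', List.drop_one]
  have hv'S : v' ∈ S := by rw [hv'eq]; exact mem_of_suffix hfac hTS (List.drop_suffix _ _)
  have hv'l : v'.length = n := by rw [hv'eq]; simp [hTl]
  -- occurrences in u
  have huocc : ∃ e ≤ u.length, w <:+ u.take e :=
    occ_of_infix (hlong u huS (by omega))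
  set q₀ := lastEnd w u with hq₀
  have hq₀occ : w <:+ u.take q₀ := lastEnd_spec huocc
  have hq₀le : q₀ ≤ n := by rw [hq₀]; have := lastEnd_le w u; omega
  have hwq₀ : w.length ≤ q₀ := length_le_lastEnd huocc
  set s := u.drop q₀ with hs'
  have hphiu : phiw w u = toFG s := rfl
  -- take-relations between T and u
  have htake : ∀ e : ℕ, e ≤ n → T.take e = u.take e := by
    intro e he
    rw [hT, List.take_append]
    have : e - u.length = 0 := by omega
    rw [this]; simp
  have hTdrop : T.drop q₀ = s ++ [a] := by
    rw [hT, List.drop_append]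
    have : q₀ - u.length = 0 := by omega
    rw [this]; simp [hs']
  by_cases hTocc : w <:+ T
  · -- case (i): a new occurrence of w is completed at the end of T
    set x₀ := s ++ [a] with hx₀
    have hx₀suf : x₀ <:+ T := by rw [← hTdrop]; exact List.drop_suffix _ _
    have hx₀S : x₀ ∈ S := mem_of_suffix hfac hTS hx₀suf
    -- w ++ x₀ is a suffix of T
    obtain ⟨q', hq'⟩ := hq₀occ
    have hwx₀suf : w ++ x₀ <:+ T := by
      refine ⟨q', ?_⟩
      rw [← List.append_assoc, hq', ← hTdrop, ← htake q₀ hq₀le, List.take_append_drop]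
    have hwx₀S : w ++ x₀ ∈ S := mem_of_suffix hfac hTS hwx₀suf
    have hwsuf : w <:+ w ++ x₀ :=
      suffix_of_suffix_le hTocc hwx₀suf (by simp)
    obtain ⟨y, hy⟩ := hwsuf
    have hyne : y ≠ [] := by
      intro h; rw [h, List.nil_append] at hy
      have := congrArg List.length hy
      simp [hx₀] at this
    have hret : x₀ ∈ retWords S w := ⟨hx₀S, hwx₀S, y, hyne, hy.symm⟩
    -- φ v' = 1 since v' ends with w
    have hwv' : w <:+ v' := by
      rw [hv'eq]
      refine suffix_drop hTocc ?_
      have : w.length ≤ q₀ := hwq₀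
      omega
    rw [phiw_of_suffix hwv', hphiu, inv_one, mul_one,
      show toFG s * FreeGroup.of a = toFG x₀ by rw [hx₀, toFG_append, toFG_singleton]]
    exact toFG_retWords_mem_closure hfac hret
  · -- case (ii): no new occurrence; the last occurrences match up
    have hv'occ : ∃ e ≤ v'.length, w <:+ v'.take e :=
      occ_of_infix (hlong v' hv'S (by omega))
    set e₁ := lastEnd w v' with he₁
    have he₁occ : w <:+ v'.take e₁ := lastEnd_spec hv'occ
    have he₁le : e₁ ≤ n := by rw [he₁]; have := lastEnd_le w v'; omega
    have hwe₁ : w.length ≤ e₁ := length_le_lastEnd hv'occ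
    -- occurrences in v' (ending at e ≤ n-1) lift to occurrences in u ending at e+1
    have hup : ∀ e : ℕ, e ≤ v'.length → w <:+ v'.take e → e + 1 ≤ n ∧ w <:+ u.take (e + 1) := by
      intro e hev hocc
      have hTe : w <:+ (T.take (e + 1)).drop 1 := by
        rw [List.drop_take]
        simp only [Nat.add_sub_cancel]
        rw [← hv'eq]; exact hocc
      have hTocc' : w <:+ T.take (e + 1) := hTe.trans (List.drop_suffix _ _)
      have hen : e + 1 ≤ n := by
        rcases Nat.lt_or_ge (e + 1) (n + 1) with h | h
        · omega
        · exfalso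
          have he' : e + 1 = n + 1 ∨ e + 1 > n + 1 := by omega
          have : T.take (e + 1) = T := by
            apply List.take_of_length_le; omega
          rw [this] at hTocc'
          exact hTocc hTocc'
      exact ⟨hen, by rwa [htake (e + 1) hen] at hTocc'⟩
    -- the last occurrence of u has e₁ + 1 ≤ q₀
    have hq₀ge : e₁ + 1 ≤ q₀ := by
      obtain ⟨hen, hocc⟩ := hup e₁ (by omega) he₁occ
      exact le_lastEnd (by omega) hocc
    -- occurrences in u ending at e ≥ |w|+1 descend to v' ending at e - 1
    have hdown : w <:+ v'.take (q₀ - 1) := by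
      have hocc : w <:+ T.take q₀ := by rwa [htake q₀ hq₀le]
      have : w <:+ (T.take q₀).drop 1 := by
        refine suffix_drop hocc ?_
        have : (T.take q₀).length = q₀ := by simp [hTl]; omega
        omega
      rw [List.drop_take] at this
      rwa [hv'eq]
  -- hence e₁ = q₀ - 1
    have he₁ge : q₀ - 1 ≤ e₁ := le_lastEnd (by omega) hdown
    have heq : q₀ = e₁ + 1 := by omega
    -- compute φ v'
    have hv'drop : v'.drop e₁ = s ++ [a] := by
      rw [hv'eq, List.drop_drop, show 1 + e₁ = q₀ by omega, hTdrop]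
    have hphiv' : phiw w v' = toFG (s ++ [a]) := by
      unfold phiw; rw [← he₁, hv'drop]
    rw [hphiu, hphiv', toFG_append, toFG_singleton]
    have hone : toFG s * FreeGroup.of a * (toFG s * FreeGroup.of a)⁻¹ = 1 := by group
    rw [hone]
    exact one_mem _

/-- Transfer: the label of any generalized closed path is in the closure of the
first return words, up to φ-conjugation. -/
theorem gpath_transfer (hfac : Factorial S)
    {n₁ : ℕ} (hlong : ∀ v ∈ S, n₁ ≤ v.length → w <:+: v)
    {n : ℕ} (hn : n₁ ≤ n) {u : List A} {g : FreeGroup A} {v : List A}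
    (hp : GPath S n u g v) :
    phiw w u * g * (phiw w v)⁻¹ ∈ Subgroup.closure (toFG '' firstRet S w) := by
  induction hp with
  | refl hu hlen => simpa using one_mem _
  | fwd a h hs ih =>
      have edge := phi_step hfac hlong hn hs
      have heq : ∀ p1 g1 p2 a1 p3 : FreeGroup A,
          p1 * (g1 * a1) * p3⁻¹ = (p1 * g1 * p2⁻¹) * (p2 * a1 * p3⁻¹) := by
        intro p1 g1 p2 a1 p3; group
      rw [heq _ _ (phiw w _) _ _]
      exact mul_mem ih edge
  | bwd a h hs ih =>
      have edge := phi_step hfac hlong hn hs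
      have heq : ∀ p1 g1 p2 a1 p3 : FreeGroup A,
          p1 * (g1 * a1⁻¹) * p3⁻¹ = (p1 * g1 * p2⁻¹) * (p3 * a1 * p2⁻¹)⁻¹ := by
        intro p1 g1 p2 a1 p3; group
      rw [heq _ _ (phiw w _) _ _]
      exact mul_mem ih (inv_mem edge)

end Transfer
section Part1

variable {A : Type*}

theorem closure_firstRet_eq_top (S : Set (List A)) (hS : STree S)
    (hur : UnifRecurrent S) (hA : ∀ a : A, [a] ∈ S) (w : List A) (hw : w ∈ S) :
    Subgroup.closure (toFG '' firstRet S w) = (⊤ : Subgroup (FreeGroup A)) := by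
  obtain ⟨⟨hfac, hbie⟩, htree⟩ := hS
  have hconn : ∀ u ∈ S, (EGraph S u).Connected := fun u hu => (htree u hu).isConnected
  have hre : RightExtendable S := hur.1
  obtain ⟨n₁, hn₁, hfact⟩ := hur.2 w hw
  have hlong : ∀ v ∈ S, n₁ ≤ v.length → w <:+: v := fun v hv hl =>
    infix_of_long hfac hfact hv hl
  set n := n₁ + w.length with hn
  -- construct a word v₀ ∈ S of length n ending with w
  obtain ⟨Z, hZS, hZl⟩ := exists_word_of_length hfac hre hw (n + n₁)
  have hW₁S : Z.drop n ∈ S := mem_of_suffix hfac hZS (List.drop_suffix _ _)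
  have hW₁l : (Z.drop n).length = n₁ := by simp [hZl]
  obtain ⟨e, he, hocc⟩ := occ_of_infix (hlong _ hW₁S (by omega))
  rw [hW₁l] at he
  set P := Z.take (n + e) with hP
  have hPl : P.length = n + e := by simp [hP, hZl]; omega
  have hPS : P ∈ S := mem_of_prefix hfac hZS (List.take_prefix _ _)
  have hwP : w <:+ P := by
    have h1 : P.drop n = (Z.drop n).take e := by
      rw [hP, List.drop_take]; simp
    have h2 : w <:+ P.drop n := by rw [h1]; exact hocc
    exact h2.trans (List.drop_suffix _ _)
  set v₀ := P.drop e with hv₀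
  have hv₀S : v₀ ∈ S := mem_of_suffix hfac hPS (List.drop_suffix _ _)
  have hv₀l : v₀.length = n := by simp [hv₀, hPl]
  have hwn : w.length ≤ n := by omega
  have hwv₀ : w <:+ v₀ := suffix_drop hwP (by omega)
  -- every g lies in the closure
  rw [Subgroup.eq_top_iff']
  intro g
  have hp : GPath S n v₀ g v₀ := gpath_full hfac hconn hbie hA n v₀ hv₀S hv₀l g
  have tr := gpath_transfer hfac hlong (by omega) hp
  rwa [phiw_of_suffix hwv₀, one_mul, inv_one, mul_one] at tr

end Part1
section PermExtend

/-- Any partial injection on a finite type extends to a permutation. -/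
theorem extend_partial {α : Type*} [Fintype α] [DecidableEq α] (pf : α → Option α)
    (hinj : ∀ i j k, pf i = some k → pf j = some k → i = j) :
    ∃ π : Equiv.Perm α, ∀ i k, pf i = some k → π i = k := by
  classical
  set p : α → Prop := fun i => (pf i).isSome with hp
  let g₀ : {i // p i} → α := fun i => (pf i.val).get i.property
  have hg₀ : Function.Injective g₀ := by
    rintro ⟨i, hi⟩ ⟨j, hj⟩ h
    have h1 : pf i = some (g₀ ⟨i, hi⟩) := (Option.some_get hi).symm
    have h2 : pf j = some (g₀ ⟨j, hj⟩) := (Option.some_get hj).symm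
    rw [h] at h1
    exact Subtype.ext (hinj i j _ h1 h2)
  let e : {i // p i} ≃ Set.range g₀ := Equiv.ofInjective g₀ hg₀
  have hcard : Fintype.card {x // ¬ p x} = Fintype.card {x // ¬ x ∈ Set.range g₀} := by
    rw [Fintype.card_subtype_compl, Fintype.card_subtype_compl]
    congr 1
    exact Fintype.card_congr e
  let e' : {x // ¬ p x} ≃ {x // ¬ x ∈ Set.range g₀} := Fintype.equivOfCardEq hcard
  let π : Equiv.Perm α :=
    ((Equiv.sumCompl p).symm.trans ((e.sumCongr e').trans
      (Equiv.sumCompl (· ∈ Set.range g₀))))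
  refine ⟨π, ?_⟩
  intro i k hik
  have hi : p i := by rw [hp]; simp only [hik, Option.isSome_some]
  have h1 : (Equiv.sumCompl p).symm i = Sum.inl ⟨i, hi⟩ :=
    Equiv.sumCompl_symm_apply_of_pos hi
  have : π i = (e ⟨i, hi⟩ : α) := by
    simp only [π, Equiv.trans_apply, h1, Equiv.sumCongr_apply, Sum.map_inl,
      Equiv.sumCompl_apply_inl]
  rw [this]
  show g₀ ⟨i, hi⟩ = k
  have h2 : some ((pf i).get hi) = some k := by rw [Option.some_get]; exact hik
  exact Option.some_inj.1 h2

end PermExtend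

section ResidualFiniteness

variable {B : Type*}

/-- In the reduced word of a free group element there is no adjacent cancelling pair. -/
theorem toWord_no_cancel [DecidableEq B] (g : FreeGroup B) (i : ℕ) (b : B) (t : Bool) :
    ¬ (g.toWord[i]? = some (b, t) ∧ g.toWord[i + 1]? = some (b, !t)) := by
  rintro ⟨h1, h2⟩
  obtain ⟨hi1, hg1⟩ := List.getElem?_eq_some_iff.1 h1
  obtain ⟨hi2, hg2⟩ := List.getElem?_eq_some_iff.1 h2
  have hv1 : g.toWord[i]'hi1 = (b, t) := by simpa [List.get_eq_getElem] using hg1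
  have hv2 : g.toWord[i+1]'hi2 = (b, !t) := by simpa [List.get_eq_getElem] using hg2
  have e1 : g.toWord.drop i = (b, t) :: g.toWord.drop (i + 1) := by
    rw [List.drop_eq_getElem_cons hi1, hv1]
  have e2 : g.toWord.drop (i + 1) = (b, !t) :: g.toWord.drop (i + 2) := by
    rw [List.drop_eq_getElem_cons hi2, hv2]
  have hsplit : g.toWord = g.toWord.take i ++ (b, t) :: (b, !t) :: g.toWord.drop (i + 2) := by
    conv_lhs => rw [← List.take_append_drop i g.toWord, e1, e2]
  exact FreeGroup.reduce.not (L₂ := g.toWord.take i) (L₃ := g.toWord.drop (i + 2))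
    (by rw [FreeGroup.reduce_toWord]; exact hsplit)

/-- Free groups are residually finite, in the form we need. -/
theorem freeGroup_residually_finite (g : FreeGroup B) (hg : g ≠ 1) :
    ∃ (m : ℕ) (ψ : FreeGroup B →* Equiv.Perm (Fin (m + 1))), ψ g ≠ 1 := by
  classical
  set L := g.toWord with hL
  set n := L.length with hn
  have hLne : L ≠ [] := fun h => hg (FreeGroup.toWord_eq_nil_iff.1 h)
  have hn1 : 1 ≤ n := by
    rw [hn]; exact List.length_pos_iff.2 hLne
  -- partial permutation constraints
  let pf : B → Fin (n + 1) → Option (Fin (n + 1)) := fun b j =>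
    if 1 ≤ (j : ℕ) ∧ L[(j : ℕ) - 1]? = some (b, true) then
      some ⟨(j : ℕ) - 1, by omega⟩
    else if h2 : L[(j : ℕ)]? = some (b, false) then
      some ⟨(j : ℕ) + 1, by
        obtain ⟨hlt, -⟩ := List.getElem?_eq_some_iff.1 h2; omega⟩
    else none
  have hpf : ∀ b, ∀ i j k, pf b i = some k → pf b j = some k → i = j := by
    intro b i j k hi hj
    have hval : ∀ (x : Fin (n + 1)), pf b x = some k →
        (1 ≤ (x : ℕ) ∧ L[(x : ℕ) - 1]? = some (b, true) ∧ (k : ℕ) = (x : ℕ) - 1) ∨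
        (L[(x : ℕ)]? = some (b, false) ∧ (k : ℕ) = (x : ℕ) + 1) := by
      intro x hx
      simp only [pf] at hx
      split_ifs at hx with hA hB
      · exact Or.inl ⟨hA.1, hA.2, (congrArg Fin.val (Option.some_inj.1 hx)).symm⟩
      · exact Or.inr ⟨hB, (congrArg Fin.val (Option.some_inj.1 hx)).symm⟩
    rcases hval i hi with ⟨hi1, hi2, hi3⟩ | ⟨hi2, hi3⟩ <;>
      rcases hval j hj with ⟨hj1, hj2, hj3⟩ | ⟨hj2, hj3⟩
    · exact Fin.ext (by omega)
    · exfalso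
      exact toWord_no_cancel g (j : ℕ) b false
        ⟨hj2, by rw [show (j : ℕ) + 1 = (i : ℕ) - 1 by omega]; exact hi2⟩
    · exfalso
      exact toWord_no_cancel g (i : ℕ) b false
        ⟨hi2, by rw [show (i : ℕ) + 1 = (j : ℕ) - 1 by omega]; exact hj2⟩
    · exact Fin.ext (by omega)
  choose σ hσ using fun b => extend_partial (pf b) (hpf b)
  -- the two usable specs
  have spec1 : ∀ (i : ℕ) (b : B), L[i]? = some (b, true) →
      ∀ (h1 : i + 1 < n + 1) (h2 : i < n + 1), σ b ⟨i + 1, h1⟩ = ⟨i, h2⟩ := by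
    intro i b hib h1 h2
    apply hσ b ⟨i + 1, h1⟩ ⟨i, h2⟩
    simp only [pf]
    rw [if_pos]
    · simp
    · constructor
      · simp
      · simpa using hib
  have spec2 : ∀ (i : ℕ) (b : B), L[i]? = some (b, false) →
      ∀ (h1 : i < n + 1) (h2 : i + 1 < n + 1), σ b ⟨i, h1⟩ = ⟨i + 1, h2⟩ := by
    intro i b hib h1 h2
    apply hσ b ⟨i, h1⟩ ⟨i + 1, h2⟩
    simp only [pf]
    rw [if_neg, dif_pos (by simpa using hib)]
    rintro ⟨hge, hcontra⟩
    exact toWord_no_cancel g ((i : ℕ) - 1) b true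
      ⟨hcontra, by rw [show (i : ℕ) - 1 + 1 = i by omega]; simpa using hib⟩
  refine ⟨n, FreeGroup.lift σ, ?_⟩
  -- evaluate
  have main : ∀ (M : List (B × Bool)) (i : ℕ), i + M.length = n → L = L.take i ++ M →
      ∀ (hil : i < n + 1),
        ((M.map fun x => bif x.2 then σ x.1 else (σ x.1)⁻¹).prod) ⟨n, by omega⟩ =
          ⟨i, hil⟩ := by
    intro M
    induction M with
    | nil =>
        intro i hi hLi hil
        have h0 : ((([] : List (B × Bool)).map
            fun x => bif x.2 then σ x.1 else (σ x.1)⁻¹).prod) = 1 := by simp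
        rw [h0]
        simp only [List.length_nil] at hi
        simp only [Equiv.Perm.coe_one, id_eq, Fin.mk.injEq]
        omega
    | cons x M' ih =>
        intro i hi hLi hil
        simp only [List.length_cons] at hi
        have hlen2 : (L.take i).length = i := by
          rw [List.length_take]
          omega
        have hgeti : L[i]? = some x := by
          conv_lhs => rw [hLi]
          rw [List.getElem?_append_right (by omega), hlen2]
          simp
        have ht1 : L.take (i + 1) = L.take i ++ [x] := by
          conv_lhs => rw [hLi]
          rw [List.take_append,
            List.take_of_length_le (by rw [hlen2]; omega), hlen2,
            Nat.add_sub_cancel_left]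
          simp
        have hLi' : L = L.take (i + 1) ++ M' := by
          rw [ht1, List.append_assoc]
          exact hLi
        have ihres := ih (i + 1) (by omega) hLi' (by omega)
        simp only [List.map_cons, List.prod_cons]
        rw [Equiv.Perm.mul_apply, ihres]
        rcases x with ⟨b, t⟩
        cases t with
        | true =>
            simp only [cond_true]
            exact spec1 i b hgeti (by omega) hil
        | false =>
            simp only [cond_false]
            have := spec2 i b hgeti hil (by omega)
            rw [← this]
            simp
  intro hcontra
  have hgmk : FreeGroup.mk L = g := FreeGroup.mk_toWord
  have := main L 0 (by omega) (by simp) (by omega)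
  rw [show (FreeGroup.lift σ) g = ((L.map fun x => bif x.2 then σ x.1 else (σ x.1)⁻¹).prod) by
    rw [← hgmk]; exact FreeGroup.lift_mk] at hcontra
  rw [hcontra] at this
  simp only [Equiv.Perm.coe_one, id_eq] at this
  have : n = 0 := by
    have := congrArg Fin.val this
    simpa using this
  omega

end ResidualFiniteness
section Hopf

theorem lift_inj_of_surj_of_card_le {B : Type*} [Finite B] {A : Type*} [Fintype A]
    (f : B → FreeGroup A) (hsurj : Function.Surjective ⇑(FreeGroup.lift f))
    (hcard : Nat.card B ≤ Fintype.card A) :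
    Function.Injective ⇑(FreeGroup.lift f) := by
  classical
  rw [← MonoidHom.ker_eq_bot_iff, Subgroup.eq_bot_iff_forall]
  intro g hg
  by_contra hne
  obtain ⟨m, ψ, hψ⟩ := freeGroup_residually_finite g hne
  letI : Fintype B := Fintype.ofFinite B
  set K := Equiv.Perm (Fin (m + 1)) with hK
  letI : Fintype (FreeGroup A →* K) := Fintype.ofEquiv (A → K) FreeGroup.lift
  letI : Fintype (FreeGroup B →* K) := Fintype.ofEquiv (B → K) FreeGroup.lift
  let comp : (FreeGroup A →* K) → (FreeGroup B →* K) := fun φ => φ.comp (FreeGroup.lift f)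
  have hinj : Function.Injective comp := by
    intro φ₁ φ₂ h
    apply MonoidHom.ext
    intro x
    obtain ⟨y, rfl⟩ := hsurj x
    exact DFunLike.congr_fun h y
  have hc1 : Fintype.card (FreeGroup A →* K) = Fintype.card K ^ Fintype.card A := by
    rw [← Fintype.card_fun]
    exact (Fintype.card_congr FreeGroup.lift).symm
  have hc2 : Fintype.card (FreeGroup B →* K) = Fintype.card K ^ Fintype.card B := by
    rw [← Fintype.card_fun]
    exact (Fintype.card_congr FreeGroup.lift).symm
  have hle : Fintype.card (FreeGroup A →* K) ≤ Fintype.card (FreeGroup B →* K) :=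
    Fintype.card_le_of_injective comp hinj
  have hge : Fintype.card (FreeGroup B →* K) ≤ Fintype.card (FreeGroup A →* K) := by
    rw [hc1, hc2]
    refine Nat.pow_le_pow_right Fintype.card_pos ?_
    rw [← Nat.card_eq_fintype_card (α := B)]
    exact hcard
  have hbij : Function.Bijective comp :=
    (Fintype.bijective_iff_injective_and_card comp).2 ⟨hinj, le_antisymm hle hge⟩
  obtain ⟨φ, hφ⟩ := hbij.2 ψ
  apply hψ
  rw [← hφ]
  show φ ((FreeGroup.lift f) g) = 1
  rw [MonoidHom.mem_ker.1 hg]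
  exact map_one φ

theorem isFree_of_closure_top_of_card_le {A : Type*} [Fintype A] (X : Set (FreeGroup A))
    (htop : Subgroup.closure X = ⊤) (hfin : X.Finite)
    (hcard : Nat.card ↥X ≤ Fintype.card A) : IsFreeSubset X := by
  haveI := hfin.to_subtype
  apply lift_inj_of_surj_of_card_le
  · rw [← MonoidHom.range_eq_top, FreeGroup.range_lift_eq_closure, Subtype.range_coe]
    exact htop
  · exact hcard

end Hopf
section Counting

variable {A : Type*} [Fintype A]

theorem finite_length_le (m : ℕ) : {l : List A | l.length ≤ m}.Finite := by
  induction m with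
  | zero =>
      apply Set.Finite.subset (Set.finite_singleton ([] : List A))
      intro l hl
      simp only [Set.mem_setOf_eq, Nat.le_zero] at hl
      simp [List.eq_nil_of_length_eq_zero hl]
  | succ m ih =>
      apply Set.Finite.subset
        (Set.Finite.insert ([] : List A)
          (Set.finite_iUnion (fun a : A => ih.image (fun l => a :: l))))
      intro l hl
      rcases l with _ | ⟨a, t⟩
      · simp
      · refine Set.mem_insert_iff.2 (Or.inr ?_)
        refine Set.mem_iUnion.2 ⟨a, ⟨t, ?_, rfl⟩⟩
        simpa using hl

open Classical in
noncomputable def lset (S : Set (List A)) (v : List A) : Finset A :=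
  Finset.univ.filter (fun a => a :: v ∈ S)

open Classical in
noncomputable def rset (S : Set (List A)) (v : List A) : Finset A :=
  Finset.univ.filter (fun b => v ++ [b] ∈ S)

open Classical in
noncomputable def eset (S : Set (List A)) (v : List A) : Finset (A × A) :=
  Finset.univ.filter (fun p => p.1 :: (v ++ [p.2]) ∈ S)

theorem mem_lset {S : Set (List A)} {v : List A} {a : A} :
    a ∈ lset S v ↔ a :: v ∈ S := by classical simp [lset]

theorem mem_rset {S : Set (List A)} {v : List A} {b : A} :
    b ∈ rset S v ↔ v ++ [b] ∈ S := by classical simp [rset]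

theorem mem_eset {S : Set (List A)} {v : List A} {p : A × A} :
    p ∈ eset S v ↔ p.1 :: (v ++ [p.2]) ∈ S := by classical simp [eset]

/-- A tree set is neutral: the number of biextensions of `v` is `l(v) + r(v) - 1`. -/
theorem tree_neutral {S : Set (List A)} (htree : ∀ v ∈ S, (EGraph S v).IsTree)
    (hfac : Factorial S) {v : List A} (hv : v ∈ S) :
    (eset S v).card + 1 = (lset S v).card + (rset S v).card := by
  classical
  have tree := htree v hv
  -- identify the two sides of the extension graph with subtypes of A
  let FL : {a : A // a :: v ∈ S} → ↥(leftExts S (letterWords A) v) :=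
    fun a => ⟨[a.1], ⟨a.1, rfl⟩, by simpa using a.2⟩
  have hFL : Function.Bijective FL := by
    constructor
    · intro a b h
      have : [a.1] = [b.1] := congrArg Subtype.val h
      exact Subtype.ext (by simpa using this)
    · rintro ⟨lv, ⟨a, ha⟩, hmem⟩
      have ha' : [a] = lv := ha
      refine ⟨⟨a, ?_⟩, Subtype.ext (by simpa using ha')⟩
      have : [a] ++ v ∈ S := by rw [ha']; exact hmem
      simpa using this
  let FR : {b : A // v ++ [b] ∈ S} → ↥(rightExts S (letterWords A) v) :=
    fun b => ⟨[b.1], ⟨b.1, rfl⟩, b.2⟩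
  have hFR : Function.Bijective FR := by
    constructor
    · intro a b h
      have : [a.1] = [b.1] := congrArg Subtype.val h
      exact Subtype.ext (by simpa using this)
    · rintro ⟨rv, ⟨b, hb⟩, hmem⟩
      have hb' : [b] = rv := hb
      refine ⟨⟨b, ?_⟩, Subtype.ext (by simpa using hb')⟩
      rw [hb']; exact hmem
  let eL := Equiv.ofBijective FL hFL
  let eR := Equiv.ofBijective FR hFR
  letI : Fintype ↥(leftExts S (letterWords A) v) := Fintype.ofEquiv _ eL
  letI : Fintype ↥(rightExts S (letterWords A) v) := Fintype.ofEquiv _ eR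
  have hVcard : Fintype.card
      (↥(leftExts S (letterWords A) v) ⊕ ↥(rightExts S (letterWords A) v)) =
      (lset S v).card + (rset S v).card := by
    rw [Fintype.card_sum, ← Fintype.card_congr eL, ← Fintype.card_congr eR]
    rw [Fintype.card_subtype, Fintype.card_subtype]
    congr 1
  -- identify the edges with the biextensions
  let ΦL : {p : A × A // p.1 :: (v ++ [p.2]) ∈ S} → ↥(leftExts S (letterWords A) v) :=
    fun p => ⟨[p.1.1], ⟨p.1.1, rfl⟩, mem_of_prefix hfac p.2 ⟨[p.1.2], by simp⟩⟩
  let ΦR : {p : A × A // p.1 :: (v ++ [p.2]) ∈ S} → ↥(rightExts S (letterWords A) v) :=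
    fun p => ⟨[p.1.2], ⟨p.1.2, rfl⟩, mem_of_suffix hfac p.2 ⟨[p.1.1], rfl⟩⟩
  let Φ : {p : A × A // p.1 :: (v ++ [p.2]) ∈ S} → ↥(EGraph S v).edgeSet :=
    fun p => ⟨s(Sum.inl (ΦL p), Sum.inr (ΦR p)),
      (SimpleGraph.mem_edgeSet _).2 (Or.inl ⟨ΦL p, ΦR p, rfl, rfl, by exact p.2⟩)⟩
  have hΦ : Function.Bijective Φ := by
    constructor
    · intro p q h
      have h' : s(Sum.inl (ΦL p), Sum.inr (ΦR p)) = s(Sum.inl (ΦL q), Sum.inr (ΦR q)) :=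
        congrArg Subtype.val h
      simp only [Sym2.eq, Sym2.rel_iff', Prod.mk.injEq, Prod.swap_prod_mk] at h'
      rcases h' with ⟨h1, h2⟩ | ⟨h1, h2⟩
      · have e1 : [p.1.1] = [q.1.1] :=
          congrArg Subtype.val (Sum.inl_injective h1)
        have e2 : [p.1.2] = [q.1.2] :=
          congrArg Subtype.val (Sum.inr_injective h2)
        apply Subtype.ext
        apply Prod.ext
        · simpa using e1
        · simpa using e2
      · exact absurd h1 (by simp)
    · rintro ⟨e, he⟩
      induction e using Sym2.ind with
      | _ x y =>
        rw [SimpleGraph.mem_edgeSet] at he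
        have main : ∀ (l : ↥(leftExts S (letterWords A) v))
            (r : ↥(rightExts S (letterWords A) v)),
            (l : List A) ++ v ++ (r : List A) ∈ S →
            ∃ p, (Φ p : Sym2 _) = s(Sum.inl l, Sum.inr r) := by
          intro l r hmem
          obtain ⟨a, ha⟩ := l.2.1
          obtain ⟨b, hb⟩ := r.2.1
          have ha' : [a] = (l : List A) := ha
          have hb' : [b] = (r : List A) := hb
          have hcond : a :: (v ++ [b]) ∈ S := by
            have h2 : ([a] ++ v) ++ [b] ∈ S := by rw [ha', hb']; exact hmem
            simpa using h2
          refine ⟨⟨(a, b), hcond⟩, ?_⟩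
          have hL : ΦL ⟨(a, b), hcond⟩ = l := Subtype.ext ha'
          have hR : ΦR ⟨(a, b), hcond⟩ = r := Subtype.ext hb'
          show s(Sum.inl (ΦL ⟨(a, b), hcond⟩), Sum.inr (ΦR ⟨(a, b), hcond⟩)) =
            s(Sum.inl l, Sum.inr r)
          rw [hL, hR]
        rcases he with ⟨l, r, hx, hy, hmem⟩ | ⟨l, r, hx, hy, hmem⟩
        · subst hx; subst hy
          obtain ⟨p, hp⟩ := main l r hmem
          exact ⟨p, Subtype.ext hp⟩
        · subst hx; subst hy
          obtain ⟨p, hp⟩ := main l r hmem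
          refine ⟨p, Subtype.ext ?_⟩
          rw [hp]
          exact Sym2.eq_swap
  have hEcard : (EGraph S v).edgeFinset.card = (eset S v).card := by
    rw [SimpleGraph.edgeFinset_card, ← Fintype.card_congr (Equiv.ofBijective Φ hΦ),
      Fintype.card_subtype]
    congr 1
  have := tree.card_edgeFinset
  rw [hEcard, hVcard] at this
  exact this

/-- Summed form of neutrality. -/
theorem neutral_sum {S : Set (List A)} (htree : ∀ v ∈ S, (EGraph S v).IsTree)
    (hfac : Factorial S) {v : List A} (hv : v ∈ S) :
    (∑ a ∈ lset S v, (rset S (a :: v)).card) + 1 =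
      (lset S v).card + (rset S v).card := by
  classical
  have hsplit : eset S v =
      (lset S v).biUnion (fun a => (rset S (a :: v)).image (fun b => (a, b))) := by
    ext ⟨a, b⟩
    simp only [mem_eset, Finset.mem_biUnion, Finset.mem_image]
    constructor
    · intro h
      refine ⟨a, ?_, b, ?_, rfl⟩
      · exact mem_lset.2 (mem_of_prefix hfac h ⟨[b], by simp⟩)
      · exact mem_rset.2 (by simpa using h)
    · rintro ⟨a', ha', b', hb', heq⟩
      obtain ⟨rfl, rfl⟩ := Prod.mk.injEq a' b' a b ▸ heq
      · exact (by simpa using mem_rset.1 hb')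
  have hcard : (eset S v).card = ∑ a ∈ lset S v, (rset S (a :: v)).card := by
    rw [hsplit, Finset.card_biUnion]
    · exact Finset.sum_congr rfl fun a _ =>
        Finset.card_image_of_injective _ (fun b₁ b₂ h => by simpa using h)
    · intro x hx y hy hxy
      rw [Function.onFun, Finset.disjoint_left]
      rintro p hp hq
      obtain ⟨b₁, -, rfl⟩ := Finset.mem_image.1 hp
      obtain ⟨b₂, -, hb₂⟩ := Finset.mem_image.1 hq
      exact hxy (by simpa using congrArg Prod.fst hb₂.symm)
  rw [← hcard]
  exact tree_neutral htree hfac hv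

end Counting
section Internal

variable {A : Type*} {S : Set (List A)} {w : List A}

/-- Words of `S` starting with `w` and containing no other (completed) occurrence of `w`:
the internal nodes of the prefix tree of complete first return words. -/
def InternalW (S : Set (List A)) (w : List A) : Set (List A) :=
  {u | u ∈ S ∧ w <+: u ∧ ∀ e : ℕ, w.length < e → e ≤ u.length → ¬ w <:+ u.take e}

theorem w_mem_internal (hw : w ∈ S) : w ∈ InternalW S w :=
  ⟨hw, List.prefix_refl w, fun e he1 he2 _ => absurd (he1.trans_le he2) (lt_irrefl _)⟩

theorem internal_length_le {n₁ : ℕ} (hfac : Factorial S)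
    (hlong : ∀ v ∈ S, n₁ ≤ v.length → w <:+: v) {u : List A}
    (hu : u ∈ InternalW S w) : u.length ≤ n₁ := by
  obtain ⟨huS, hupre, hno⟩ := hu
  by_contra hlen
  push_neg at hlen
  have hYS : u.drop 1 ∈ S := mem_of_suffix hfac huS (List.drop_suffix _ _)
  have hYlen : n₁ ≤ (u.drop 1).length := by simp; omega
  obtain ⟨e, he, hocc⟩ := occ_of_infix (hlong _ hYS hYlen)
  have hYlen' : (u.drop 1).length = u.length - 1 := by simp
  have hocc' : w <:+ u.take (e + 1) := by
    have h1 : (u.drop 1).take e = (u.take (e + 1)).drop 1 := by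
      rw [List.drop_take]; simp
    rw [h1] at hocc
    exact hocc.trans (List.drop_suffix _ _)
  have hwe : w.length ≤ e := le_trans hocc.length_le (by simp)
  exact hno (e + 1) (by omega) (by omega) hocc'

theorem internal_children (hfac : Factorial S) {u : List A} {b : A}
    (hu : u ∈ InternalW S w) (hub : u ++ [b] ∈ S) :
    u ++ [b] ∈ InternalW S w ∨ ∃ x ∈ firstRet S w, u ++ [b] = w ++ x := by
  classical
  obtain ⟨huS, hupre, hno⟩ := hu
  have hwu : w.length ≤ u.length := hupre.length_le
  by_cases hc : ∀ e : ℕ, w.length < e → e ≤ (u ++ [b]).length → ¬ w <:+ (u ++ [b]).take e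
  · exact Or.inl ⟨hub, hupre.trans ⟨[b], rfl⟩, hc⟩
  · push_neg at hc
    obtain ⟨e, he1, he2, hocc⟩ := hc
    simp only [List.length_append, List.length_singleton] at he2
    have heq : e = u.length + 1 := by
      rcases Nat.lt_or_ge e (u.length + 1) with h | h
      · exfalso
        rw [List.take_append_of_le_length (by omega)] at hocc
        exact hno e he1 (by omega) hocc
      · omega
    subst heq
    have hwc : w <:+ u ++ [b] := by
      rwa [List.take_of_length_le (by simp)] at hocc
    set x := (u ++ [b]).drop w.length with hx
    have hxeq : w ++ x = u ++ [b] := by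
      conv_rhs => rw [← List.take_append_drop w.length (u ++ [b]), ← hx]
      congr 1
      exact List.prefix_iff_eq_take.1 (hupre.trans ⟨[b], rfl⟩)
    have hxS : x ∈ S := mem_of_suffix hfac hub (List.drop_suffix _ _)
    obtain ⟨y, hy⟩ := hwc
    have hyne : y ≠ [] := by
      intro h
      rw [h, List.nil_append] at hy
      have := congrArg List.length hy
      simp at this
      omega
    have hxΓ : x ∈ retWords S w := by
      refine ⟨hxS, by rwa [hxeq], y, hyne, by rw [hxeq, hy]⟩
    refine Or.inr ⟨x, ⟨hxΓ, ?_⟩, hxeq.symm⟩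
    rintro ⟨y', hy'Γ, z, hzne, hxyz⟩
    have hy'ne := retWords_ne_nil hy'Γ
    have hy'len : 1 ≤ y'.length := List.length_pos_iff.2 hy'ne
    have hzlen : 1 ≤ z.length := List.length_pos_iff.2 hzne
    have hxlen : x.length = u.length + 1 - w.length := by
      rw [hx]; simp
    have he' : w.length + y'.length ≤ u.length := by
      have : x.length = y'.length + z.length := by rw [hxyz]; simp
      omega
    apply hno (w.length + y'.length) (by omega) he'
    have hsplit : u ++ [b] = (w ++ y') ++ z := by
      rw [← hxeq, hxyz, List.append_assoc]
    have htk : u.take (w.length + y'.length) = w ++ y' := by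
      have h1 : (u ++ [b]).take (w.length + y'.length) = w ++ y' := by
        rw [hsplit, List.take_left' (by simp)]
      rwa [List.take_append_of_le_length (by omega)] at h1
    rw [htk]
    exact retWords_suffix hy'Γ

theorem internal_dropLast {u : List A} (hu : u ∈ InternalW S w) (hne : u ≠ w)
    (hfac : Factorial S) : u.dropLast ∈ InternalW S w := by
  obtain ⟨huS, hupre, hno⟩ := hu
  have hlt : w.length < u.length := by
    rcases Nat.lt_or_ge w.length u.length with h | h
    · exact h
    · exact absurd (hupre.eq_of_length (le_antisymm hupre.length_le h)).symm hne
  refine ⟨mem_of_prefix hfac huS (List.dropLast_prefix u), ?_, ?_⟩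
  · rw [List.prefix_iff_eq_take, List.dropLast_eq_take, List.take_take]
    rw [List.prefix_iff_eq_take] at hupre
    rw [min_eq_left (by omega)]
    exact hupre
  · intro e he1 he2 hocc
    rw [List.length_dropLast] at he2
    rw [List.dropLast_eq_take, List.take_take, min_eq_left (by omega)] at hocc
    exact hno e he1 (by omega) hocc

theorem firstRet_dropLast (hfac : Factorial S) {x : List A} (hx : x ∈ firstRet S w) :
    (w ++ x).dropLast ∈ InternalW S w := by
  obtain ⟨⟨hxS, hwxS, y, hyne, hy⟩, hnot⟩ := hx
  have hxne : x ≠ [] := retWords_ne_nil ⟨hxS, hwxS, y, hyne, hy⟩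
  have hxlen : 1 ≤ x.length := List.length_pos_iff.2 hxne
  have hlen : (w ++ x).length = w.length + x.length := by simp
  refine ⟨mem_of_prefix hfac hwxS (List.dropLast_prefix _), ?_, ?_⟩
  · rw [List.prefix_iff_eq_take, List.dropLast_eq_take, List.take_take]
    rw [min_eq_left (by simp; omega)]
    rw [List.take_append_of_le_length le_rfl]
    simp
  · intro e he1 he2 hocc
    rw [List.length_dropLast] at he2
    simp only [List.length_append, List.length_singleton] at he2
    rw [List.dropLast_eq_take, List.take_take,
      min_eq_left (by simp only [List.length_append]; omega)] at hocc
    -- occurrence gives a shorter return word prefix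
    have htk : (w ++ x).take e = w ++ x.take (e - w.length) := by
      rw [List.take_append, List.take_of_length_le (by omega)]
    rw [htk] at hocc
    set y' := x.take (e - w.length) with hy'
    have hy'S : y' ∈ S := mem_of_prefix hfac hxS (List.take_prefix _ _)
    have hwy'S : w ++ y' ∈ S := by
      rw [← htk]; exact mem_of_prefix hfac hwxS (List.take_prefix _ _)
    obtain ⟨y₂, hy₂⟩ := hocc
    have hy₂ne : y₂ ≠ [] := by
      intro h
      rw [h, List.nil_append] at hy₂
      have h2 : y' = [] := by
        have h3 := congrArg List.length hy₂
        simp only [List.length_append] at h3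
        exact List.eq_nil_of_length_eq_zero (by omega)
      rw [hy'] at h2
      have h4 := congrArg List.length h2
      simp only [List.length_take, List.length_nil] at h4
      omega
    have hy'Γ : y' ∈ retWords S w := ⟨hy'S, hwy'S, y₂, hy₂ne, hy₂.symm⟩
    apply hnot
    refine ⟨y', hy'Γ, x.drop (e - w.length), ?_, (List.take_append_drop _ _).symm⟩
    intro h
    have := congrArg List.length h
    simp at this
    omega

theorem firstRet_not_internal {x : List A} (hx : x ∈ firstRet S w) :
    w ++ x ∉ InternalW S w := by
  obtain ⟨⟨hxS, hwxS, y, hyne, hy⟩, -⟩ := hx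
  rintro ⟨-, -, hno⟩
  have hxne : x ≠ [] := retWords_ne_nil ⟨hxS, hwxS, y, hyne, hy⟩
  have hxlen : 1 ≤ x.length := List.length_pos_iff.2 hxne
  refine hno (w.length + x.length) (by omega) (by simp) ?_
  rw [List.take_of_length_le (by simp)]
  exact ⟨y, hy.symm⟩

theorem internal_suffix_unique {u u' x : List A} (hu : u ∈ InternalW S w)
    (hu' : u' ∈ InternalW S w) (hsx : u <:+ x) (hsx' : u' <:+ x) : u = u' := by
  -- helper: an internal word cannot be a proper suffix of another
  have key : ∀ v v' : List A, v ∈ InternalW S w → v' ∈ InternalW S w →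
      v <:+ v' → v.length < v'.length → False := by
    intro v v' hv hv' hsuf hlen
    obtain ⟨p, hp⟩ := hsuf
    have hplen : p.length = v'.length - v.length := by
      have := congrArg List.length hp
      simp at this
      omega
    have hwv : w.length ≤ v.length := hv.2.1.length_le
    apply hv'.2.2 (p.length + w.length) (by omega) (by omega)
    have hwpre : w = v.take w.length := List.prefix_iff_eq_take.1 hv.2.1
    rw [← hp, List.take_append, List.take_of_length_le (by omega),
      Nat.add_sub_cancel_left, ← hwpre]
    exact List.suffix_append _ _
  rcases Nat.lt_trichotomy u.length u'.length with h | h | h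
  · exact absurd (key u u' hu hu' (suffix_of_suffix_le hsx hsx' (by omega)) h) not_false
  · exact (suffix_of_suffix_le hsx hsx' (by omega)).eq_of_length h
  · exact absurd (key u' u hu' hu (suffix_of_suffix_le hsx' hsx (by omega)) h) not_false

theorem exists_internal_suffix {n₁ : ℕ} (hfac : Factorial S)
    (hlong : ∀ v ∈ S, n₁ ≤ v.length → w <:+: v) {x : List A}
    (hx : x ∈ S) (hlen : n₁ ≤ x.length) :
    ∃ u ∈ InternalW S w, u <:+ x := by
  have hocc := occ_of_infix (hlong x hx hlen)
  have hsuf : w ++ x.drop (lastEnd w x) <:+ x := suffix_lastEnd hocc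
  set u := w ++ x.drop (lastEnd w x) with hu
  have hle := lastEnd_le w x
  have hwle := length_le_lastEnd hocc
  have hulen : u.length = x.length - lastEnd w x + w.length := by
    rw [hu]; simp; omega
  have hsuf2 := hsuf
  obtain ⟨p, hp⟩ := hsuf2
  have hplen : p.length = lastEnd w x - w.length := by
    have := congrArg List.length hp
    simp [hulen] at this
    omega
  refine ⟨u, ⟨mem_of_suffix hfac hx hsuf, ⟨x.drop (lastEnd w x), rfl⟩, ?_⟩, hsuf⟩
  intro e he1 he2 hocc'
  -- transfer occurrence to x
  have hxtake : x.take (p.length + e) = p ++ u.take e := by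
    rw [← hp, List.take_append,
      List.take_of_length_le (show p.length ≤ p.length + e by omega),
      Nat.add_sub_cancel_left]
  have hxocc : w <:+ x.take (p.length + e) := by
    rw [hxtake]
    obtain ⟨q, hq⟩ := hocc'
    exact ⟨p ++ q, by rw [List.append_assoc, hq]⟩
  have hgt : lastEnd w x < p.length + e := by omega
  have hle2 : p.length + e ≤ x.length := by
    have := congrArg List.length hp
    simp at this
    omega
  exact lastEnd_greatest hgt hle2 hxocc

end Internal
section FirstRetBound

variable {A : Type*} {S : Set (List A)} {w : List A}

/-- A middle occurrence of `w` in `w ++ x` contradicts `x` being a first return word. -/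
theorem firstRet_no_middle (hfac : Factorial S) {x : List A} (hx : x ∈ firstRet S w)
    {e : ℕ} (he1 : w.length < e) (he2 : e < w.length + x.length)
    (hocc : w <:+ (w ++ x).take e) : False := by
  obtain ⟨⟨hxS, hwxS, y, hyne, hy⟩, hnot⟩ := hx
  have htk : (w ++ x).take e = w ++ x.take (e - w.length) := by
    rw [List.take_append, List.take_of_length_le (by omega)]
  rw [htk] at hocc
  set y' := x.take (e - w.length) with hy'
  have hy'len : y'.length = e - w.length := by
    rw [hy', List.length_take]; omega
  have hy'S : y' ∈ S := mem_of_prefix hfac hxS (List.take_prefix _ _)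
  have hwy'S : w ++ y' ∈ S := by
    rw [← htk]; exact mem_of_prefix hfac hwxS (List.take_prefix _ _)
  obtain ⟨y₂, hy₂⟩ := hocc
  have hy₂ne : y₂ ≠ [] := by
    intro h
    rw [h, List.nil_append] at hy₂
    have h3 := congrArg List.length hy₂
    simp only [List.length_append] at h3
    omega
  have hy'Γ : y' ∈ retWords S w := ⟨hy'S, hwy'S, y₂, hy₂ne, hy₂.symm⟩
  apply hnot
  refine ⟨y', hy'Γ, x.drop (e - w.length), ?_, (List.take_append_drop _ _).symm⟩
  intro h
  have h3 := congrArg List.length h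
  simp only [List.length_drop, List.length_nil] at h3
  omega

theorem firstRet_length_le {n₁ : ℕ} (hfac : Factorial S)
    (hlong : ∀ v ∈ S, n₁ ≤ v.length → w <:+: v) {x : List A}
    (hx : x ∈ firstRet S w) : x.length ≤ n₁ + 1 := by
  by_contra hlen
  push_neg at hlen
  have hwxS : w ++ x ∈ S := hx.1.2.1
  have hY1 : ((w ++ x).drop 1).take n₁ ∈ S :=
    mem_of_prefix hfac (mem_of_suffix hfac hwxS (List.drop_suffix _ _))
      (List.take_prefix _ _)
  have hY1len : (((w ++ x).drop 1).take n₁).length = n₁ := by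
    rw [List.length_take, List.length_drop, List.length_append]
    omega
  obtain ⟨e, he, hocc⟩ := occ_of_infix (hlong _ hY1 (le_of_eq hY1len.symm))
  rw [hY1len] at he
  have hocc1 : w <:+ ((w ++ x).drop 1).take e := by
    rwa [List.take_take, min_eq_left he] at hocc
  have hocc2 : w <:+ (w ++ x).take (e + 1) := by
    have h1 : ((w ++ x).drop 1).take e = ((w ++ x).take (e + 1)).drop 1 := by
      rw [List.drop_take]; simp
    rw [h1] at hocc1
    exact hocc1.trans (List.drop_suffix _ _)
  have hwe : w.length ≤ e := le_trans hocc1.length_le (by simp)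
  exact firstRet_no_middle hfac hx (e := e + 1) (by omega) (by omega) hocc2

end FirstRetBound
section Cardinality

variable {A : Type*} [Fintype A]

theorem card_firstRet {S : Set (List A)} {w : List A} {n₁ : ℕ}
    (htree : ∀ v ∈ S, (EGraph S v).IsTree) (hfac : Factorial S)
    (hA : ∀ a : A, [a] ∈ S) (hw : w ∈ S)
    (hlong : ∀ v ∈ S, n₁ ≤ v.length → w <:+: v) :
    ∃ hfin : (firstRet S w).Finite, hfin.toFinset.card = Fintype.card A := by
  classical
  have hRfin : (firstRet S w).Finite :=
    (_root_.finite_length_le (n₁ + 1)).subset (fun x hx => firstRet_length_le hfac hlong hx)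
  refine ⟨hRfin, ?_⟩
  set R := hRfin.toFinset with hRdef
  have hRmem : ∀ x, x ∈ R ↔ x ∈ firstRet S w := fun x => hRfin.mem_toFinset
  have hIfin : (InternalW S w).Finite :=
    (_root_.finite_length_le n₁).subset (fun u hu => internal_length_le hfac hlong hu)
  set J := hIfin.toFinset with hJdef
  have hJmem : ∀ u, u ∈ J ↔ u ∈ InternalW S w := fun u => hIfin.mem_toFinset
  have hwJ : w ∈ J := (hJmem w).2 (w_mem_internal hw)
  -- ============ the tree count ============
  have key1 : (∑ u ∈ J, (rset S u).card) + 1 = J.card + R.card := by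
    have hCdisj : ∀ u ∈ J, ∀ u' ∈ J, u ≠ u' →
        Disjoint ((rset S u).image (fun b => u ++ [b]))
          ((rset S u').image (fun b => u' ++ [b])) := by
      intro u _ u' _ hne
      rw [Finset.disjoint_left]
      rintro c hc hc'
      obtain ⟨b, -, rfl⟩ := Finset.mem_image.1 hc
      obtain ⟨b', -, heq⟩ := Finset.mem_image.1 hc'
      exact hne (List.append_inj' heq rfl).1.symm
    set C := J.biUnion (fun u => (rset S u).image (fun b => u ++ [b])) with hC
    have hCcard : C.card = ∑ u ∈ J, (rset S u).card := by
      rw [hC, Finset.card_biUnion hCdisj]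
      exact Finset.sum_congr rfl fun u _ =>
        Finset.card_image_of_injective _
          (fun b b' h => by simpa using List.append_cancel_left h)
    have hCeq : C = (J.erase w) ∪ R.image (fun x => w ++ x) := by
      ext c
      simp only [hC, Finset.mem_biUnion, Finset.mem_union, Finset.mem_erase,
        Finset.mem_image]
      constructor
      · rintro ⟨u, huJ, b, hb, rfl⟩
        have huI := (hJmem u).1 huJ
        rcases internal_children hfac huI (mem_rset.1 hb) with h | ⟨x, hxR, hceq⟩
        · left
          refine ⟨?_, (hJmem _).2 h⟩
          intro hcw
          have h1 := huI.2.1.length_le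
          have h2 := congrArg List.length hcw
          simp at h2
          omega
        · right
          exact ⟨x, (hRmem x).2 hxR, hceq.symm⟩
      · rintro (⟨hnew, hcJ⟩ | ⟨x, hxR, rfl⟩)
        · have hcI := (hJmem c).1 hcJ
          have hcne : c ≠ [] := by
            intro h
            apply hnew
            have h2 := hcI.2.1.length_le
            rw [h] at h2 ⊢
            simp only [List.length_nil, Nat.le_zero] at h2
            exact (List.eq_nil_of_length_eq_zero h2).symm
          refine ⟨c.dropLast, (hJmem _).2 (internal_dropLast hcI hnew hfac),
            c.getLast hcne, ?_, List.dropLast_append_getLast hcne⟩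
          exact mem_rset.2 (by rw [List.dropLast_append_getLast hcne]; exact hcI.1)
        · have hxR' := (hRmem x).1 hxR
          have hxne : x ≠ [] := retWords_ne_nil hxR'.1
          have hwxne : w ++ x ≠ [] := by simp [hxne]
          refine ⟨(w ++ x).dropLast, (hJmem _).2 (firstRet_dropLast hfac hxR'),
            (w ++ x).getLast hwxne, ?_, List.dropLast_append_getLast hwxne⟩
          exact mem_rset.2 (by rw [List.dropLast_append_getLast hwxne]; exact hxR'.1.2.1)
    have hdisj2 : Disjoint (J.erase w) (R.image (fun x => w ++ x)) := by
      rw [Finset.disjoint_left]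
      rintro c hc hc'
      obtain ⟨x, hx, rfl⟩ := Finset.mem_image.1 hc'
      exact firstRet_not_internal ((hRmem x).1 hx)
        ((hJmem _).1 (Finset.mem_of_mem_erase hc))
    have himgcard : (R.image (fun x => w ++ x)).card = R.card :=
      Finset.card_image_of_injective _ (fun x y h => List.append_cancel_left h)
    have hfin : C.card = J.card - 1 + R.card := by
      rw [hCeq, Finset.card_union_of_disjoint hdisj2, Finset.card_erase_of_mem hwJ,
        himgcard]
    have hJpos : 1 ≤ J.card := Finset.card_pos.2 ⟨w, hwJ⟩
    omega
  -- ============ the Rauzy counts ============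
  have hWfin : ∀ k : ℕ, {x : List A | x ∈ S ∧ x.length = k}.Finite := fun k =>
    (_root_.finite_length_le k).subset (fun x hx => le_of_eq hx.2)
  set W : ℕ → Finset (List A) := fun k => (hWfin k).toFinset with hWdef
  have hWmem : ∀ k x, x ∈ W k ↔ x ∈ S ∧ x.length = k := fun k x =>
    (hWfin k).mem_toFinset
  have hW1card : ∀ k, (∑ x ∈ W k, (rset S x).card) = (W (k + 1)).card := by
    intro k
    have hdisj : ∀ x ∈ W k, ∀ y ∈ W k, x ≠ y →
        Disjoint ((rset S x).image (fun b => x ++ [b]))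
          ((rset S y).image (fun b => y ++ [b])) := by
      intro x _ y _ hne
      rw [Finset.disjoint_left]
      rintro c hc hc'
      obtain ⟨b, -, rfl⟩ := Finset.mem_image.1 hc
      obtain ⟨b', -, heq⟩ := Finset.mem_image.1 hc'
      exact hne (List.append_inj' heq rfl).1.symm
    have hsplit : W (k + 1) = (W k).biUnion (fun x => (rset S x).image (fun b => x ++ [b])) := by
      ext y
      simp only [hWmem, Finset.mem_biUnion, Finset.mem_image]
      constructor
      · rintro ⟨hyS, hylen⟩
        have hyne : y ≠ [] := by intro h; rw [h] at hylen; simp at hylen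
        refine ⟨y.dropLast, ⟨mem_of_prefix hfac hyS (List.dropLast_prefix y), ?_⟩,
          y.getLast hyne, ?_, List.dropLast_append_getLast hyne⟩
        · rw [List.length_dropLast, hylen]; omega
        · exact mem_rset.2 (by rw [List.dropLast_append_getLast hyne]; exact hyS)
      · rintro ⟨x, ⟨hxS, hxlen⟩, b, hb, rfl⟩
        exact ⟨mem_rset.1 hb, by simp [hxlen]⟩
    rw [hsplit, Finset.card_biUnion hdisj]
    exact Finset.sum_congr rfl fun x _ =>
      (Finset.card_image_of_injective _
        (fun b b' h => by simpa using List.append_cancel_left h)).symm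
  have hWlcard : ∀ k, (∑ x ∈ W k, (lset S x).card) = (W (k + 1)).card := by
    intro k
    have hdisj : ∀ x ∈ W k, ∀ y ∈ W k, x ≠ y →
        Disjoint ((lset S x).image (fun a => a :: x))
          ((lset S y).image (fun a => a :: y)) := by
      intro x _ y _ hne
      rw [Finset.disjoint_left]
      rintro c hc hc'
      obtain ⟨a, -, rfl⟩ := Finset.mem_image.1 hc
      obtain ⟨a', -, heq⟩ := Finset.mem_image.1 hc'
      exact hne ((List.cons_eq_cons.mp heq).2).symm
    have hsplit : W (k + 1) = (W k).biUnion (fun x => (lset S x).image (fun a => a :: x)) := by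
      ext y
      simp only [hWmem, Finset.mem_biUnion, Finset.mem_image]
      constructor
      · rintro ⟨hyS, hylen⟩
        have hyne : y ≠ [] := by intro h; rw [h] at hylen; simp at hylen
        refine ⟨y.tail, ⟨mem_of_suffix hfac hyS (List.tail_suffix y), ?_⟩,
          y.head hyne, ?_, List.cons_head_tail hyne⟩
        · rw [List.length_tail, hylen]; omega
        · exact mem_lset.2 (by rw [List.cons_head_tail hyne]; exact hyS)
      · rintro ⟨x, ⟨hxS, hxlen⟩, a, ha, rfl⟩
        exact ⟨mem_lset.1 ha, by simp [hxlen]⟩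
    rw [hsplit, Finset.card_biUnion hdisj]
    exact Finset.sum_congr rfl fun x _ =>
      (Finset.card_image_of_injective _
        (fun a a' h => (List.cons_eq_cons.mp h).1)).symm
  have hWecard : ∀ k, (∑ x ∈ W k, (eset S x).card) = (W (k + 2)).card := by
    intro k
    have hdisj : ∀ x ∈ W k, ∀ y ∈ W k, x ≠ y →
        Disjoint ((eset S x).image (fun p => p.1 :: (x ++ [p.2])))
          ((eset S y).image (fun p => p.1 :: (y ++ [p.2]))) := by
      intro x _ y _ hne
      rw [Finset.disjoint_left]
      rintro c hc hc'
      obtain ⟨p, -, rfl⟩ := Finset.mem_image.1 hc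
      obtain ⟨q, -, heq⟩ := Finset.mem_image.1 hc'
      have h2 := (List.cons_eq_cons.mp heq).2
      exact hne (List.append_inj' h2 rfl).1.symm
    have hsplit : W (k + 2) =
        (W k).biUnion (fun x => (eset S x).image (fun p => p.1 :: (x ++ [p.2]))) := by
      ext y
      simp only [hWmem, Finset.mem_biUnion, Finset.mem_image]
      constructor
      · rintro ⟨hyS, hylen⟩
        have hyne : y ≠ [] := by intro h; rw [h] at hylen; simp at hylen
        have htne : y.tail ≠ [] := by
          intro h
          have := congrArg List.length (List.cons_head_tail hyne)
          rw [h] at this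
          simp [hylen] at this
        refine ⟨y.tail.dropLast,
          ⟨mem_of_prefix hfac (mem_of_suffix hfac hyS (List.tail_suffix y))
            (List.dropLast_prefix _), ?_⟩,
          (y.head hyne, y.tail.getLast htne), ?_, ?_⟩
        · rw [List.length_dropLast, List.length_tail, hylen]; omega
        · refine mem_eset.2 ?_
          have h1 : y.tail.dropLast ++ [y.tail.getLast htne] = y.tail :=
            List.dropLast_append_getLast htne
          show _ :: (y.tail.dropLast ++ [y.tail.getLast htne]) ∈ S
          rw [h1, List.cons_head_tail hyne]
          exact hyS
        · show _ :: (y.tail.dropLast ++ [y.tail.getLast htne]) = y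
          rw [List.dropLast_append_getLast htne, List.cons_head_tail hyne]
      · rintro ⟨x, ⟨hxS, hxlen⟩, p, hp, rfl⟩
        refine ⟨mem_eset.1 hp, by simp [hxlen]⟩
    rw [hsplit, Finset.card_biUnion hdisj]
    refine Finset.sum_congr rfl fun x _ => (Finset.card_image_of_injective _ ?_).symm
    rintro ⟨a, b⟩ ⟨a', b'⟩ h
    obtain ⟨h1, h2⟩ := List.cons_eq_cons.mp h
    obtain ⟨-, h3⟩ := List.append_inj' h2 rfl
    simp only [Prod.mk.injEq]
    exact ⟨h1, by simpa using h3⟩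
  -- neutrality summed over W k
  have hneu : ∀ k, (W (k + 2)).card + (W k).card = (W (k + 1)).card + (W (k + 1)).card := by
    intro k
    have h1 : ∀ x ∈ W k, (eset S x).card + 1 = (lset S x).card + (rset S x).card :=
      fun x hx => tree_neutral htree hfac ((hWmem k x).1 hx).1
    have h2 : ∑ x ∈ W k, ((eset S x).card + 1) =
        ∑ x ∈ W k, ((lset S x).card + (rset S x).card) :=
      Finset.sum_congr rfl h1
    rw [Finset.sum_add_distrib, Finset.sum_add_distrib, Finset.sum_const,
      smul_eq_mul, mul_one, hWecard, hWlcard, hW1card] at h2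
    exact h2
  have hW0 : (W 0).card = 1 := by
    have : W 0 = {[]} := by
      ext x
      simp only [hWmem, Finset.mem_singleton]
      constructor
      · rintro ⟨-, h⟩; exact List.eq_nil_of_length_eq_zero h
      · rintro rfl; exact ⟨nil_mem_S hfac hw, rfl⟩
    rw [this]; rfl
  have hW1 : (W 1).card = Fintype.card A := by
    have : W 1 = Finset.univ.image (fun a : A => [a]) := by
      ext x
      simp only [hWmem, Finset.mem_image]
      constructor
      · rintro ⟨hxS, hxlen⟩
        obtain ⟨a, rfl⟩ := List.length_eq_one_iff.1 hxlen
        exact ⟨a, Finset.mem_univ a, rfl⟩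
      · rintro ⟨a, -, rfl⟩
        exact ⟨hA a, rfl⟩
    rw [this, Finset.card_image_of_injective _ (fun a a' h => by simpa using h)]
    simp
  have hdiff : ∀ k, (W (k + 1)).card + 1 = (W k).card + Fintype.card A := by
    intro k
    induction k with
    | zero => rw [hW0, hW1]; omega
    | succ k ih =>
        have h1 := hneu k
        have h2 : (W (k + 1 + 1)).card = (W (k + 2)).card := by norm_num
        omega
  -- ============ the telescope ============
  have hEfin : ∀ (v : List A) (k : ℕ),
      {x : List A | x ∈ S ∧ x.length = k ∧ v <:+ x}.Finite := fun v k =>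
    (hWfin k).subset (fun x hx => ⟨hx.1, hx.2.1⟩)
  set E : List A → Finset (List A) := fun v => (hEfin v n₁).toFinset with hEdef
  have hEmem : ∀ v x, x ∈ E v ↔ x ∈ S ∧ x.length = n₁ ∧ v <:+ x := fun v x =>
    (hEfin v n₁).mem_toFinset
  have tel : ∀ (d : ℕ) (v : List A), v ∈ S → v.length + d = n₁ →
      (∑ x ∈ E v, (rset S x).card) + 1 = (rset S v).card + (E v).card := by
    intro d
    induction d with
    | zero =>
        intro v hv hl
        have : E v = {v} := by
          ext x
          simp only [hEmem, Finset.mem_singleton]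
          constructor
          · rintro ⟨-, hxlen, hsuf⟩
            exact (hsuf.eq_of_length (by omega)).symm
          · rintro rfl
            exact ⟨hv, by omega, List.suffix_refl _⟩
        rw [this]
        simp
    | succ d ih =>
        intro v hv hl
        have hdisj : ∀ a ∈ lset S v, ∀ a' ∈ lset S v, a ≠ a' →
            Disjoint (E (a :: v)) (E (a' :: v)) := by
          intro a _ a' _ hne
          rw [Finset.disjoint_left]
          rintro x hx hx'
          have h1 := ((hEmem _ x).1 hx).2.2
          have h2 := ((hEmem _ x).1 hx').2.2
          have := suffix_of_suffix_le h1 h2 (by simp)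
          exact hne (List.cons_eq_cons.mp (this.eq_of_length (by simp))).1
        have hpart : E v = (lset S v).biUnion (fun a => E (a :: v)) := by
          ext x
          simp only [hEmem, Finset.mem_biUnion]
          constructor
          · rintro ⟨hxS, hxlen, hsuf⟩
            obtain ⟨p, hp⟩ := hsuf
            have hpne : p ≠ [] := by
              intro h
              rw [h, List.nil_append] at hp
              rw [← hp] at hxlen
              omega
            refine ⟨p.getLast hpne, ?_, hxS, hxlen, p.dropLast, ?_⟩
            · refine mem_lset.2 (mem_of_suffix hfac hxS ?_)
              refine ⟨p.dropLast, ?_⟩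
              rw [show p.dropLast ++ p.getLast hpne :: v =
                (p.dropLast ++ [p.getLast hpne]) ++ v by simp, List.dropLast_append_getLast hpne]
              exact hp
            · rw [show p.dropLast ++ p.getLast hpne :: v =
                (p.dropLast ++ [p.getLast hpne]) ++ v by simp, List.dropLast_append_getLast hpne]
              exact hp
          · rintro ⟨a, ha, hxS, hxlen, hsuf⟩
            exact ⟨hxS, hxlen, (List.suffix_cons a v).trans hsuf⟩
        have hpd : (↑(lset S v) : Set A).PairwiseDisjoint (fun a => E (a :: v)) :=
          fun a ha b hb hne => hdisj a (by simpa using ha) b (by simpa using hb) hne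
        have hih : ∀ a ∈ lset S v, (∑ x ∈ E (a :: v), (rset S x).card) + 1 =
            (rset S (a :: v)).card + (E (a :: v)).card := by
          intro a ha
          refine ih (a :: v) (mem_lset.1 ha) ?_
          simp only [List.length_cons]
          omega
        have hsum := Finset.sum_congr rfl hih
        rw [Finset.sum_add_distrib, Finset.sum_add_distrib, Finset.sum_const,
          smul_eq_mul, mul_one] at hsum
        have hneu2 := neutral_sum htree hfac hv
        rw [hpart, Finset.sum_biUnion hpd, Finset.card_biUnion hdisj]
        omega
  -- ============ partition of W n₁ by internal suffixes ============
  have hpd2 : ∀ u ∈ J, ∀ u' ∈ J, u ≠ u' → Disjoint (E u) (E u') := by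
    intro u hu u' hu' hne
    rw [Finset.disjoint_left]
    rintro x hx hx'
    exact hne (internal_suffix_unique ((hJmem u).1 hu) ((hJmem u').1 hu')
      ((hEmem u x).1 hx).2.2 ((hEmem u' x).1 hx').2.2)
  have hpartW : W n₁ = J.biUnion E := by
    ext x
    simp only [hWmem, Finset.mem_biUnion]
    constructor
    · rintro ⟨hxS, hxlen⟩
      obtain ⟨u, huI, husuf⟩ :=
        exists_internal_suffix hfac hlong hxS (le_of_eq hxlen.symm)
      exact ⟨u, (hJmem u).2 huI, (hEmem u x).2 ⟨hxS, hxlen, husuf⟩⟩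
    · rintro ⟨u, -, hx⟩
      obtain ⟨h1, h2, -⟩ := (hEmem u x).1 hx
      exact ⟨h1, h2⟩
  have htelJ : ∀ u ∈ J, (∑ x ∈ E u, (rset S x).card) + 1 =
      (rset S u).card + (E u).card := by
    intro u hu
    have huI := (hJmem u).1 hu
    refine tel (n₁ - u.length) u huI.1 ?_
    have := internal_length_le hfac hlong huI
    omega
  have hsumJ := Finset.sum_congr rfl htelJ
  rw [Finset.sum_add_distrib, Finset.sum_add_distrib, Finset.sum_const,
    smul_eq_mul, mul_one] at hsumJ
  have hpdJ : (↑J : Set (List A)).PairwiseDisjoint E :=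
    fun u hu u' hu' hne => hpd2 u (by simpa using hu) u' (by simpa using hu') hne
  have hWsum : ∑ x ∈ W n₁, (rset S x).card = ∑ u ∈ J, ∑ x ∈ E u, (rset S x).card := by
    rw [hpartW, Finset.sum_biUnion hpdJ]
  have hWcardp : (W n₁).card = ∑ u ∈ J, (E u).card := by
    rw [hpartW, Finset.card_biUnion hpd2]
  have hfinal1 := hW1card n₁
  have hfinal2 := hdiff n₁
  omega

end Cardinality
/-- **Return Theorem.** In a uniformly recurrent tree set containing the alphabet,
every set of first right return words is a basis of the free group on `A`. -/
theorem statement3 {A : Type*} [Fintype A] (S : Set (List A)) (hS : STree S)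
    (hur : UnifRecurrent S) (hA : ∀ a : A, [a] ∈ S) (w : List A) (hw : w ∈ S) :
    Subgroup.closure (toFG '' firstRet S w) = (⊤ : Subgroup (FreeGroup A)) ∧
      IsFreeSubset (toFG '' firstRet S w) := by
  have htop := closure_firstRet_eq_top S hS hur hA w hw
  refine ⟨htop, ?_⟩
  obtain ⟨n₁, hn₁, hfact⟩ := hur.2 w hw
  have hfac : Factorial S := hS.1.1
  have hlong : ∀ v ∈ S, n₁ ≤ v.length → w <:+: v := fun v hv hl =>
    infix_of_long hfac hfact hv hl
  have htree : ∀ v ∈ S, (EGraph S v).IsTree := hS.2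
  obtain ⟨hRfin, hRcard⟩ := card_firstRet htree hfac hA hw hlong
  have hXfin : (toFG '' firstRet S w).Finite := hRfin.image _
  have hcard : Nat.card ↥(toFG '' firstRet S w) ≤ Fintype.card A := by
    calc Nat.card ↥(toFG '' firstRet S w) ≤ Nat.card ↥(firstRet S w) :=
          Nat.card_image_le hRfin
    _ = Fintype.card A := by
        rw [Nat.card_coe_set_eq, Set.ncard_eq_toFinset_card _ hRfin]
        exact hRcard
  exact isFree_of_closure_top_of_card_le _ htop hXfin hcard
end

section
/- Let S be a recurrent connected set over a finite alphabet A with A ⊆ S. For every n ≥ 0 and every vertex v of the Rauzy graph G_n(S) of order n, the group described by G_n(S) with respect to v is the whole free group F_A on A. -/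
open List

/-- Edge of the Rauzy graph `G_n(S)`: `(x, a, y)` with `xa ∈ S ∩ Ay`. -/
def RauzyAdj {A : Type*} (S : Set (List A)) (n : ℕ) (x : List A) (a : A) (y : List A) : Prop :=
  x ∈ S ∧ x.length = n ∧ y ∈ S ∧ y.length = n ∧ x ++ [a] ∈ S ∧ ∃ b : A, x ++ [a] = b :: y

/-- Generalized paths in the Rauzy graph `G_n(S)`, together with their label (an element of
the free group): edges may be traversed forward (label `a`) or backward (label `a⁻¹`). -/
inductive RauzyGPath {A : Type*} (S : Set (List A)) (n : ℕ) :
    List A → List A → FreeGroup A → Prop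
  | nil (x : List A) (hx : x ∈ S) (hl : x.length = n) : RauzyGPath S n x x 1
  | fwd {x y z : List A} {g : FreeGroup A} {a : A} :
      RauzyGPath S n x y g → RauzyAdj S n y a z → RauzyGPath S n x z (g * FreeGroup.of a)
  | bwd {x y z : List A} {g : FreeGroup A} {a : A} :
      RauzyGPath S n x y g → RauzyAdj S n z a y → RauzyGPath S n x z (g * (FreeGroup.of a)⁻¹)

section Aux

variable {A : Type*}

lemma gpath_src {S : Set (List A)} {n : ℕ} {x y : List A} {g : FreeGroup A}
    (h : RauzyGPath S n x y g) : x ∈ S ∧ x.length = n := by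
  induction h with
  | nil hx hl => exact ⟨hx, hl⟩
  | fwd _ _ ih => exact ih
  | bwd _ _ ih => exact ih

lemma gpath_trans {S : Set (List A)} {n : ℕ} {x y z : List A} {g h : FreeGroup A}
    (h1 : RauzyGPath S n x y g) (h2 : RauzyGPath S n y z h) :
    RauzyGPath S n x z (g * h) := by
  revert h1
  induction h2 with
  | nil _ _ => intro h1; simpa using h1
  | fwd _ hadj ih =>
      intro h1
      rw [← mul_assoc]
      exact (ih h1).fwd hadj
  | bwd _ hadj ih =>
      intro h1
      rw [← mul_assoc]
      exact (ih h1).bwd hadj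

lemma gpath_fwd_single {S : Set (List A)} {n : ℕ} {x y : List A} {a : A}
    (h : RauzyAdj S n x a y) : RauzyGPath S n x y (FreeGroup.of a) := by
  simpa using RauzyGPath.fwd (RauzyGPath.nil x h.1 h.2.1) h

lemma gpath_bwd_single {S : Set (List A)} {n : ℕ} {x y : List A} {a : A}
    (h : RauzyAdj S n x a y) : RauzyGPath S n y x (FreeGroup.of a)⁻¹ := by
  simpa using RauzyGPath.bwd (RauzyGPath.nil y h.2.2.1 h.2.2.2.1) h

lemma gpath_symm {S : Set (List A)} {n : ℕ} {x y : List A} {g : FreeGroup A}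
    (h : RauzyGPath S n x y g) : RauzyGPath S n y x g⁻¹ := by
  induction h with
  | nil hx hl => simpa using RauzyGPath.nil _ hx hl
  | fwd _ hadj ih =>
      simpa [mul_inv_rev] using gpath_trans (gpath_bwd_single hadj) ih
  | bwd _ hadj ih =>
      simpa [mul_inv_rev] using gpath_trans (gpath_fwd_single hadj) ih

/-- Auxiliary: the Rauzy-graph vertex attached to a vertex of the extension graph. -/
def EVert (S : Set (List A)) (w : List A) :
    (↥(leftExts S (letterWords A) w) ⊕ ↥(rightExts S (letterWords A) w)) → List A
  | Sum.inl l => l.val ++ w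
  | Sum.inr r => w ++ r.val

/-- Auxiliary: the label attached to a vertex of the extension graph. -/
def ELab (S : Set (List A)) (w : List A) :
    (↥(leftExts S (letterWords A) w) ⊕ ↥(rightExts S (letterWords A) w)) → FreeGroup A
  | Sum.inl _ => 1
  | Sum.inr r => toFG r.val

lemma evert_mem {S : Set (List A)} {w : List A} {n : ℕ} (hln : w.length = n)
    (x : ↥(leftExts S (letterWords A) w) ⊕ ↥(rightExts S (letterWords A) w)) :
    EVert S w x ∈ S ∧ (EVert S w x).length = n + 1 := by
  cases x with
  | inl l =>
      obtain ⟨c, hc⟩ := l.prop.1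
      refine ⟨l.prop.2, ?_⟩
      simp [EVert, ← hc, hln, Nat.add_comm]
  | inr r =>
      obtain ⟨a, ha⟩ := r.prop.1
      refine ⟨r.prop.2, ?_⟩
      simp [EVert, ← ha, hln]

lemma egraph_edge {S : Set (List A)} {w : List A} {n : ℕ} (hln : w.length = n)
    {x y : ↥(leftExts S (letterWords A) w) ⊕ ↥(rightExts S (letterWords A) w)}
    (h : (EGraph S w).Adj x y) :
    RauzyGPath S (n + 1) (EVert S w x) (EVert S w y) ((ELab S w x)⁻¹ * ELab S w y) := by
  rcases h with ⟨l, r, hx, hy, hS⟩ | ⟨l, r, hx, hy, hS⟩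
  · subst hx; subst hy
    obtain ⟨c, hc⟩ := l.prop.1
    obtain ⟨a, ha⟩ := r.prop.1
    replace hc : ([c] : List A) = l.val := hc
    replace ha : ([a] : List A) = r.val := ha
    simp only [EVert, ELab, ← hc, ← ha]
    have hlab : (1 : FreeGroup A)⁻¹ * toFG [a] = FreeGroup.of a := by simp [toFG]
    rw [hlab]
    refine gpath_fwd_single ⟨?_, ?_, ?_, ?_, ?_, c, ?_⟩
    · rw [hc]; exact l.prop.2
    · simp [hln, Nat.add_comm]
    · rw [ha]; exact r.prop.2
    · simp [hln]
    · rw [hc, ha]; exact hS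
    · simp
  · subst hx; subst hy
    obtain ⟨c, hc⟩ := l.prop.1
    obtain ⟨a, ha⟩ := r.prop.1
    replace hc : ([c] : List A) = l.val := hc
    replace ha : ([a] : List A) = r.val := ha
    simp only [EVert, ELab, ← hc, ← ha]
    have hlab : (toFG [a])⁻¹ * (1 : FreeGroup A) = (FreeGroup.of a)⁻¹ := by simp [toFG]
    rw [hlab]
    refine gpath_bwd_single ⟨?_, ?_, ?_, ?_, ?_, c, ?_⟩
    · rw [hc]; exact l.prop.2
    · simp [hln, Nat.add_comm]
    · rw [ha]; exact r.prop.2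
    · simp [hln]
    · rw [hc, ha]; exact hS
    · simp

lemma egraph_walk {S : Set (List A)} {w : List A} {n : ℕ} (hln : w.length = n)
    {x y : ↥(leftExts S (letterWords A) w) ⊕ ↥(rightExts S (letterWords A) w)}
    (p : (EGraph S w).Walk x y) :
    RauzyGPath S (n + 1) (EVert S w x) (EVert S w y) ((ELab S w x)⁻¹ * ELab S w y) := by
  induction p with
  | nil =>
      rename_i u
      have hm := evert_mem (S := S) hln u
      rw [inv_mul_cancel]
      exact RauzyGPath.nil _ hm.1 hm.2
  | cons h q ih =>
      simpa [mul_assoc] using gpath_trans (egraph_edge hln h) ih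

lemma fiber_path {S : Set (List A)} (hconn : SConn S) {w : List A} {n : ℕ}
    (hw : w ∈ S) (hln : w.length = n) {b b' : A} (hb : b :: w ∈ S) (hb' : b' :: w ∈ S) :
    RauzyGPath S (n + 1) (b :: w) (b' :: w) 1 := by
  have hc := hconn.2 w hw
  have hbm : ([b] : List A) ∈ leftExts S (letterWords A) w := ⟨⟨b, rfl⟩, hb⟩
  have hbm' : ([b'] : List A) ∈ leftExts S (letterWords A) w := ⟨⟨b', rfl⟩, hb'⟩
  obtain ⟨p⟩ := hc.preconnected (Sum.inl ⟨[b], hbm⟩) (Sum.inl ⟨[b'], hbm'⟩)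
  simpa [EVert, ELab] using egraph_walk hln p

lemma exists_left_letter {S : Set (List A)} (hfac : Factorial S) (hconn : SConn S)
    {w : List A} (hw : w ∈ S) {a : A} (ha : w ++ [a] ∈ S) :
    ∃ d : A, d :: w ∈ S ∧ (d :: w) ++ [a] ∈ S := by
  obtain ⟨a', b', hab⟩ := hconn.1.2 w hw
  have hl0 : ([a'] : List A) ++ w ∈ S := hfac _ hab _ ⟨[], [b'], by simp⟩
  have ham : ([a] : List A) ∈ rightExts S (letterWords A) w := ⟨⟨a, rfl⟩, ha⟩
  have ha'm : ([a'] : List A) ∈ leftExts S (letterWords A) w := ⟨⟨a', rfl⟩, hl0⟩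
  have hc := hconn.2 w hw
  obtain ⟨p⟩ := hc.preconnected (Sum.inr ⟨[a], ham⟩) (Sum.inl ⟨[a'], ha'm⟩)
  cases p with
  | cons h q =>
      rcases h with ⟨l, r, hx, hy, hS⟩ | ⟨l, r, hx, hy, hS⟩
      · simp at hx
      · obtain rfl : r = ⟨[a], ham⟩ := (Sum.inr.inj hx).symm
        obtain ⟨d, hd⟩ := l.prop.1
        replace hd : ([d] : List A) = l.val := hd
        refine ⟨d, ?_, ?_⟩
        · have h1 : ([d] : List A) ++ w ∈ S := by rw [hd]; exact l.prop.2
          simpa using h1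
        · have h2 : ([d] : List A) ++ w ++ [a] ∈ S := by rw [hd]; exact hS
          simpa using h2

lemma gpath_lift_s5 {S : Set (List A)} (hfac : Factorial S) (hconn : SConn S)
    {n : ℕ} {x y : List A} {g : FreeGroup A} (h : RauzyGPath S n x y g) :
    ∀ b : A, b :: x ∈ S → ∃ b' : A, b' :: y ∈ S ∧ RauzyGPath S (n + 1) (b :: x) (b' :: y) g := by
  induction h with
  | nil hx hl =>
      intro b hb
      exact ⟨b, hb, RauzyGPath.nil _ hb (by simp [hl])⟩
  | @fwd y z g a p hadj ih =>
      intro b hb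
      obtain ⟨b', hb', q⟩ := ih b hb
      obtain ⟨ymem, ylen, zmem, zlen, hya, c, hc⟩ := hadj
      obtain ⟨d, hd1, hd2⟩ := exists_left_letter hfac hconn ymem hya
      have hcz : c :: z ∈ S := hc ▸ hya
      have adjN : RauzyAdj S (n + 1) (d :: y) a (c :: z) :=
        ⟨hd1, by simp [ylen], hcz, by simp [zlen], hd2, d, by rw [cons_append, hc]⟩
      have p2 := fiber_path hconn ymem ylen hb' hd1
      have total := gpath_trans (gpath_trans q p2) (gpath_fwd_single adjN)
      exact ⟨c, hcz, by simpa using total⟩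
  | @bwd y z g a p hadj ih =>
      intro b hb
      obtain ⟨b', hb', q⟩ := ih b hb
      obtain ⟨zmem, zlen, ymem, ylen, hza, c, hc⟩ := hadj
      obtain ⟨d, hd1, hd2⟩ := exists_left_letter hfac hconn zmem hza
      have hcy : c :: y ∈ S := hc ▸ hza
      have adjN : RauzyAdj S (n + 1) (d :: z) a (c :: y) :=
        ⟨hd1, by simp [zlen], hcy, by simp [ylen], hd2, d, by rw [cons_append, hc]⟩
      have p2 := fiber_path hconn ymem ylen hb' hcy
      have total := gpath_trans (gpath_trans q p2) (gpath_bwd_single adjN)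
      exact ⟨d, hd1, by simpa using total⟩

lemma main_aux {S : Set (List A)} (hfac : Factorial S) (hconn : SConn S)
    (hA : ∀ a : A, [a] ∈ S) :
    ∀ n : ℕ, ∀ v ∈ S, v.length = n → ∀ g : FreeGroup A, RauzyGPath S n v v g := by
  intro n
  induction n with
  | zero =>
      intro v hv hlen g
      obtain rfl : v = [] := List.length_eq_zero_iff.mp hlen
      induction g using FreeGroup.induction_on with
      | C1 => exact RauzyGPath.nil [] hv rfl
      | of a => exact gpath_fwd_single ⟨hv, rfl, hv, rfl, hA a, a, rfl⟩
      | inv_of a hₐ => exact gpath_symm hₐ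
      | mul g1 g2 h1 h2 => exact gpath_trans h1 h2
  | succ n ih =>
      intro v hv hlen g
      cases v with
      | nil => simp at hlen
      | cons b w =>
          have hw : w ∈ S := hfac _ hv _ ⟨[b], [], by simp⟩
          have hwl : w.length = n := by simpa using hlen
          obtain ⟨b', hb', q⟩ := gpath_lift_s5 hfac hconn (ih w hw hwl g) b hv
          have p2 := fiber_path hconn hw hwl hb' hv
          simpa using gpath_trans q p2

end Aux

/-- In a recurrent connected set containing the alphabet, the group described by any Rauzy
graph with respect to any of its vertices is the whole free group on `A`. -/
theorem statement5 {A : Type*} [Fintype A] (S : Set (List A)) (hrec : Recurrent S)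
    (hconn : SConn S) (hA : ∀ a : A, [a] ∈ S) (n : ℕ) (v : List A)
    (hv : v ∈ S) (hlen : v.length = n) :
    {g : FreeGroup A | RauzyGPath S n v v g} = Set.univ := by
  apply Set.eq_univ_of_forall
  intro g
  exact main_aux hrec.2.1 hconn hA n v hv hlen g
end

section
/- Let S be a uniformly recurrent set over a finite alphabet A with A ⊆ S. If S is strong (resp. weak, resp. neutral), then for every w in S the set R_S(w) of first right return words to w has at least (resp. at most, resp. exactly) Card(A) elements. -/
open List

namespace Stmt6

open Finset
open scoped Classical

variable {A : Type*}

lemma isFactor_iff_infix {u v : List A} : IsFactor u v ↔ u <:+: v := by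
  constructor
  · rintro ⟨p, s, rfl⟩; exact ⟨p, s, rfl⟩
  · rintro ⟨p, s, h⟩; exact ⟨p, s, h.symm⟩

lemma mem_of_infix {S : Set (List A)} (hS : Factorial S) {u v : List A}
    (hv : v ∈ S) (h : u <:+: v) : u ∈ S :=
  hS v hv u (isFactor_iff_infix.mpr h)

lemma infix_concat {w v : List A} {b : A} (h : w <:+: v ++ [b]) : w <:+ v ++ [b] ∨ w <:+: v := by
  obtain ⟨s, t, hst⟩ := h
  rcases List.eq_nil_or_concat t with rfl | ⟨t', c, rfl⟩
  · left; exact ⟨s, by simpa using hst⟩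
  · right
    refine ⟨s, t', ?_⟩
    have h2 : (s ++ w ++ t') ++ [c] = v ++ [b] := by
      simpa [List.concat_eq_append, List.append_assoc] using hst
    have h3 := congrArg List.dropLast h2
    simpa [List.dropLast_concat] using h3

lemma suffix_of_cons {w u : List A} {a : A} (h : w <:+ a :: u) (hl : w.length ≤ u.length) :
    w <:+ u := by
  obtain ⟨p, hp⟩ := h
  cases p with
  | nil =>
    exfalso
    have := congrArg List.length hp
    simp at this
    omega
  | cons c p' =>
    refine ⟨p', ?_⟩
    simpa using congrArg List.tail hp

lemma suffix_tail {w x : List A} (h : w <:+ x) (hl : w.length < x.length) : w <:+ x.tail := by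
  obtain ⟨p, rfl⟩ := h
  cases p with
  | nil => simp at hl
  | cons c p' => exact ⟨p', by simp⟩

lemma prefix_dropLast {w x : List A} (h : w <+: x) (hl : w.length < x.length) :
    w <+: x.dropLast := by
  rw [List.dropLast_eq_take]
  exact List.prefix_take_iff.mpr ⟨h, by omega⟩

noncomputable def lFin (S : Set (List A)) [Fintype A] (v : List A) : Finset A :=
  Finset.univ.filter (fun a => a :: v ∈ S)

noncomputable def rFin (S : Set (List A)) [Fintype A] (v : List A) : Finset A :=
  Finset.univ.filter (fun b => v ++ [b] ∈ S)

lemma ncard_setOf {α : Type*} [Fintype α] (P : α → Prop) :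
    Set.ncard {a | P a} = (Finset.univ.filter P).card := by
  rw [← Set.ncard_coe_finset (Finset.univ.filter P)]
  congr 1
  ext a; simp

lemma ncard_pairs [Fintype A] (P : A → A → Prop) :
    Set.ncard {p : A × A | P p.1 p.2} = ∑ b : A, Set.ncard {a : A | P a b} := by
  rw [ncard_setOf (fun p : A × A => P p.1 p.2)]
  rw [Finset.card_eq_sum_card_fiberwise (f := Prod.snd) (t := Finset.univ)
    (fun x _ => Finset.mem_univ _)]
  refine Finset.sum_congr rfl fun b _ => ?_
  rw [ncard_setOf (fun a => P a b), Finset.filter_filter]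
  refine Finset.card_bij' (fun p _ => p.1) (fun a _ => (a, b)) ?_ ?_ ?_ ?_
  · intro p hp; simp only [Finset.mem_filter, Finset.mem_univ, true_and] at hp ⊢
    rcases hp with ⟨h1, h2⟩; rwa [h2] at h1
  · intro a ha; simp only [Finset.mem_filter, Finset.mem_univ, true_and] at ha ⊢
    exact ⟨ha, trivial⟩
  · intro p hp; simp only [Finset.mem_filter, Finset.mem_univ, true_and] at hp
    exact Prod.ext rfl hp.2.symm
  · intro a _; rfl

lemma mval_eq [Fintype A] {S : Set (List A)} (hS : Factorial S) (v : List A) :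
    ((lFin S v).card : ℤ) - 1 + mval S v
      = ∑ b ∈ rFin S v, (((lFin S (v ++ [b])).card : ℤ) - 1) := by
  have he : Set.ncard {p : A × A | p.1 :: (v ++ [p.2]) ∈ S}
      = ∑ b : A, (lFin S (v ++ [b])).card := by
    rw [ncard_pairs (fun a b => a :: (v ++ [b]) ∈ S)]
    exact Finset.sum_congr rfl fun b _ => ncard_setOf _
  have hsum : ∑ b : A, ((lFin S (v ++ [b])).card : ℤ)
      = ∑ b ∈ rFin S v, ((lFin S (v ++ [b])).card : ℤ) := by
    symm
    apply Finset.sum_subset (Finset.subset_univ _)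
    intro b _ hb
    have hz : lFin S (v ++ [b]) = ∅ := by
      ext a
      simp only [lFin, Finset.mem_filter, Finset.mem_univ, true_and, Finset.notMem_empty,
        iff_false]
      intro ha
      exact hb (by
        simp only [rFin, Finset.mem_filter, Finset.mem_univ, true_and]
        exact mem_of_infix hS ha ⟨[a], [], by simp⟩)
    simp [hz]
  have hl : Set.ncard {a : A | a :: v ∈ S} = (lFin S v).card := ncard_setOf _
  have hr : Set.ncard {b : A | v ++ [b] ∈ S} = (rFin S v).card := ncard_setOf _
  rw [mval, he, hl, hr, Finset.sum_sub_distrib, Finset.sum_const, ← hsum]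
  push_cast
  ring
set_option linter.unusedSectionVars false
set_option linter.unusedVariables false
/-- Words of `S` not containing `w` as a factor. -/
def Nset (S : Set (List A)) (w : List A) : Set (List A) := {v | v ∈ S ∧ ¬ w <:+: v}

/-- Words of `S` with exactly one occurrence of `w`, as a suffix. -/
def Qset (S : Set (List A)) (w : List A) : Set (List A) :=
  {u | u ∈ S ∧ w <:+ u ∧ ¬ w <:+: u.dropLast}

/-- Complete first return words to `w`. -/
def Lset (S : Set (List A)) (w : List A) : Set (List A) :=
  {u | u ∈ S ∧ w <+: u ∧ w <:+ u ∧ w.length < u.length ∧ ¬ w <:+: u.tail.dropLast}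

section Trees

variable [Fintype A] {S : Set (List A)} {w : List A} {n : ℕ}
variable (hS : Factorial S) (hw : w ∈ S) (hwne : w ≠ [])
variable (hn : ∀ v ∈ S, v.length = n → w <:+: v)

include hS hn in
lemma Nset_len {v : List A} (hv : v ∈ Nset S w) : v.length < n := by
  by_contra hc
  push_neg at hc
  have h1 : v.take n ∈ S := mem_of_infix hS hv.1 (List.take_prefix n v).isInfix
  have h2 : w <:+: v.take n := hn _ h1 (by simp [hc])
  exact hv.2 (h2.trans (List.take_prefix n v).isInfix)

include hS hn in
lemma Qset_len {u : List A} (hu : u ∈ Qset S w) : u.length < n + 1 := by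
  have h1 : u.dropLast ∈ Nset S w := ⟨mem_of_infix hS hu.1 (List.dropLast_prefix u).isInfix, hu.2.2⟩
  have := Nset_len hS hn h1
  simp [List.length_dropLast] at this
  omega

include hwne in
lemma Qset_wlen {u : List A} (hu : u ∈ Qset S w) : 0 < w.length ∧ w.length ≤ u.length :=
  ⟨List.length_pos_iff.mpr hwne, hu.2.1.length_le⟩

include hS hwne in
lemma Lset_tail {u : List A} (hu : u ∈ Lset S w) : u.tail ∈ Qset S w := by
  obtain ⟨huS, hpre, hsuf, hlen, hmid⟩ := hu
  refine ⟨mem_of_infix hS huS (List.tail_suffix u).isInfix, suffix_tail hsuf hlen, hmid⟩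

include hS hn hwne in
lemma Lset_len {u : List A} (hu : u ∈ Lset S w) : u.length < n + 2 := by
  have := Qset_len hS hn (Lset_tail hS hwne hu)
  have hne : u ≠ [] := by
    intro h; rw [h] at hu; simpa using hu.2.2.2.1
  have : u.tail.length = u.length - 1 := by simp
  have := Qset_len hS hn (Lset_tail hS hwne hu)
  simp [List.length_tail] at this
  have hul : 0 < u.length := List.length_pos_iff.mpr hne
  omega

include hwne in
lemma Lset_not_Qset {u : List A} (hu : u ∈ Lset S w) : u ∉ Qset S w := by
  intro hq
  exact hq.2.2 ((prefix_dropLast hu.2.1 hu.2.2.2.1).isInfix)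

include hwne hw in
lemma w_mem_Qset : w ∈ Qset S w := by
  refine ⟨hw, List.suffix_refl w, fun h => ?_⟩
  have := h.length_le
  have hl : 0 < w.length := List.length_pos_iff.mpr hwne
  simp [List.length_dropLast] at this
  omega

lemma Qset_eq_w {u : List A} (hu : u ∈ Qset S w) (hl : u.length = w.length) : u = w :=
  (hu.2.1.eq_of_length (by omega)).symm ▸ rfl

-- children of an `Nset` node
include hS in
lemma N_child {v : List A} {b : A} (hv : v ∈ Nset S w) (hb : v ++ [b] ∈ S) :
    v ++ [b] ∈ Nset S w ∨ v ++ [b] ∈ Qset S w := by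
  by_cases hinf : w <:+: v ++ [b]
  · right
    rcases infix_concat hinf with hsuf | hinf'
    · exact ⟨hb, hsuf, by rw [List.dropLast_concat]; exact hv.2⟩
    · exact absurd hinf' hv.2
  · left; exact ⟨hb, hinf⟩

include hS in
lemma NQ_parent {x : List A} (hx : x ∈ Nset S w ∪ Qset S w) (hne : x ≠ []) :
    x.dropLast ∈ Nset S w := by
  rcases hx with hx | hx
  · exact ⟨mem_of_infix hS hx.1 (List.dropLast_prefix x).isInfix,
      fun h => hx.2 (h.trans (List.dropLast_prefix x).isInfix)⟩
  · exact ⟨mem_of_infix hS hx.1 (List.dropLast_prefix x).isInfix, hx.2.2⟩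

-- children of a `Qset` node
include hS hwne in
lemma Q_child {u : List A} {a : A} (hu : u ∈ Qset S w) (ha : a :: u ∈ S) :
    a :: u ∈ Qset S w ∨ a :: u ∈ Lset S w := by
  have hune : u ≠ [] := by
    intro h; rw [h] at hu
    exact hwne (List.eq_nil_of_suffix_nil hu.2.1)
  have hwu : w.length ≤ u.length := hu.2.1.length_le
  have hsuf : w <:+ a :: u := hu.2.1.trans (List.suffix_cons a u)
  by_cases hpre : w <+: a :: u
  · right
    refine ⟨ha, hpre, hsuf, by simp; omega, ?_⟩
    simpa using hu.2.2
  · left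
    refine ⟨ha, hsuf, fun hinf => ?_⟩
    have hd : (a :: u).dropLast = a :: u.dropLast := by
      cases u with
      | nil => exact absurd rfl hune
      | cons c t => rfl
    rw [hd] at hinf
    rcases List.infix_cons_iff.mp hinf with hp | hi
    · exact hpre (hp.trans (by exact (List.cons_prefix_cons).mpr ⟨rfl, List.dropLast_prefix u⟩))
    · exact hu.2.2 hi

include hS hwne in
lemma QL_parent {x : List A} (hx : x ∈ Qset S w) (hlen : w.length < x.length) :
    x.tail ∈ Qset S w := by
  refine ⟨mem_of_infix hS hx.1 (List.tail_suffix x).isInfix, suffix_tail hx.2.1 hlen, ?_⟩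
  intro h
  rw [← List.tail_dropLast] at h
  exact hx.2.2 (h.trans (List.tail_suffix x.dropLast).isInfix)

end Trees
section Fin

variable [Fintype A]

noncomputable def allLt (A : Type*) [Fintype A] (m : ℕ) : Finset (List A) :=
  (List.finite_length_lt A m).toFinset

lemma mem_allLt {m : ℕ} {x : List A} : x ∈ allLt A m ↔ x.length < m := by
  simp [allLt]

noncomputable def NF (S : Set (List A)) (w : List A) (n : ℕ) : Finset (List A) :=
  (allLt A (n+2)).filter (· ∈ Nset S w)

noncomputable def QF (S : Set (List A)) (w : List A) (n : ℕ) : Finset (List A) :=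
  (allLt A (n+2)).filter (· ∈ Qset S w)

noncomputable def LF (S : Set (List A)) (w : List A) (n : ℕ) : Finset (List A) :=
  (allLt A (n+2)).filter (· ∈ Lset S w)

variable {S : Set (List A)} {w : List A} {n : ℕ}
variable (hS : Factorial S) (hw : w ∈ S) (hwne : w ≠ [])
variable (hn : ∀ v ∈ S, v.length = n → w <:+: v)

include hS hn in
lemma mem_NF {x : List A} : x ∈ NF S w n ↔ x ∈ Nset S w := by
  simp only [NF, Finset.mem_filter, mem_allLt]
  exact ⟨fun h => h.2, fun h => ⟨by have := Nset_len hS hn h; omega, h⟩⟩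

include hS hn in
lemma mem_QF {x : List A} : x ∈ QF S w n ↔ x ∈ Qset S w := by
  simp only [QF, Finset.mem_filter, mem_allLt]
  exact ⟨fun h => h.2, fun h => ⟨by have := Qset_len hS hn h; omega, h⟩⟩

include hS hn hwne in
lemma mem_LF {x : List A} : x ∈ LF S w n ↔ x ∈ Lset S w := by
  simp only [LF, Finset.mem_filter, mem_allLt]
  exact ⟨fun h => h.2, fun h => ⟨Lset_len hS hwne hn h, h⟩⟩

include hS hn in
lemma children1 (k : ℕ) :
    ((QF S w n).filter (fun u => u.length = k+1)) ∪ ((NF S w n).filter (fun v => v.length = k+1))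
    = ((NF S w n).filter (fun v => v.length = k)).biUnion
        (fun v => (rFin S v).image (fun b => v ++ [b])) := by
  ext x
  simp only [Finset.mem_union, Finset.mem_filter, Finset.mem_biUnion, Finset.mem_image,
    mem_NF hS hn, mem_QF hS hn, rFin, Finset.mem_univ, true_and]
  constructor
  · rintro (⟨hx, hlen⟩ | ⟨hx, hlen⟩)
    all_goals {
      have hne : x ≠ [] := by intro h; rw [h] at hlen; simp at hlen
      have hd : x.dropLast ∈ Nset S w := by
        first
        | exact NQ_parent hS (Or.inr hx) hne
        | exact NQ_parent hS (Or.inl hx) hne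
      refine ⟨x.dropLast, ⟨hd, by simp [List.length_dropLast, hlen]⟩,
        x.getLast hne, ?_, List.dropLast_append_getLast hne⟩
      rw [List.dropLast_append_getLast hne]
      first
      | exact hx.1
      | exact hx.1
    }
  · rintro ⟨v, ⟨hv, hlen⟩, b, hb, rfl⟩
    have hlen2 : (v ++ [b]).length = k + 1 := by simp [hlen]
    rcases N_child hS hv hb with h | h
    · right; exact ⟨h, hlen2⟩
    · left; exact ⟨h, hlen2⟩

include hS hwne hn in
lemma children2 (k : ℕ) (hk : w.length ≤ k) :
    ((LF S w n).filter (fun u => u.length = k+1)) ∪ ((QF S w n).filter (fun u => u.length = k+1))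
    = ((QF S w n).filter (fun u => u.length = k)).biUnion
        (fun u => (lFin S u).image (fun a => a :: u)) := by
  ext x
  simp only [Finset.mem_union, Finset.mem_filter, Finset.mem_biUnion, Finset.mem_image,
    mem_QF hS hn, mem_LF hS hwne hn, lFin, Finset.mem_univ, true_and]
  constructor
  · rintro (⟨hx, hlen⟩ | ⟨hx, hlen⟩)
    · -- x ∈ Lset
      have hq : x.tail ∈ Qset S w := Lset_tail hS hwne hx
      have hne : x ≠ [] := by intro h; rw [h] at hlen; simp at hlen
      refine ⟨x.tail, ⟨hq, by simp [List.length_tail, hlen]⟩, x.head hne, ?_, List.cons_head_tail hne⟩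
      rw [List.cons_head_tail hne]; exact hx.1
    · -- x ∈ Qset, length k+1 > w.length
      have hq : x.tail ∈ Qset S w := QL_parent hS hwne hx (by omega)
      have hne : x ≠ [] := by intro h; rw [h] at hlen; simp at hlen
      refine ⟨x.tail, ⟨hq, by simp [List.length_tail, hlen]⟩, x.head hne, ?_, List.cons_head_tail hne⟩
      rw [List.cons_head_tail hne]; exact hx.1
  · rintro ⟨u, ⟨hu, hlen⟩, a, ha, rfl⟩
    have hlen2 : (a :: u).length = k + 1 := by simp [hlen]
    rcases Q_child hS hwne hu ha with h | h
    · right; exact ⟨h, hlen2⟩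
    · left; exact ⟨h, hlen2⟩

end Fin
section Tele

variable [Fintype A]
variable {S : Set (List A)} {w : List A} {n : ℕ}
variable (hS : Factorial S) (hw : w ∈ S) (hwne : w ≠ [])
variable (hA : ∀ a : A, [a] ∈ S)
variable (hn : ∀ v ∈ S, v.length = n → w <:+: v)

include hS hw hwne hA hn in
lemma tele1 : ∀ k : ℕ,
    (∑ u ∈ (QF S w n).filter (fun u => u.length ≤ k), (((lFin S u).card : ℤ) - 1))
    + (∑ v ∈ (NF S w n).filter (fun v => v.length = k), (((lFin S v).card : ℤ) - 1))
    = (Fintype.card A : ℤ) - 1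
      + ∑ v ∈ (NF S w n).filter (fun v => v.length < k), mval S v := by
  intro k
  induction k with
  | zero =>
    have h1 : (QF S w n).filter (fun u => u.length ≤ 0) = ∅ := by
      refine Finset.filter_eq_empty_iff.mpr fun u hu => ?_
      rw [mem_QF hS hn] at hu
      have := Qset_wlen hwne hu
      omega
    have h2 : (NF S w n).filter (fun v => v.length = 0) = {([] : List A)} := by
      ext x
      simp only [Finset.mem_filter, Finset.mem_singleton, mem_NF hS hn]
      constructor
      · rintro ⟨_, hl⟩; exact List.eq_nil_of_length_eq_zero hl
      · rintro rfl
        refine ⟨⟨hS w hw [] ⟨[], w, by simp⟩, fun h => hwne (List.eq_nil_of_infix_nil h)⟩, rfl⟩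
    have h3 : (NF S w n).filter (fun v => v.length < 0) = ∅ := by
      refine Finset.filter_eq_empty_iff.mpr fun v _ => by omega
    have h4 : lFin S ([] : List A) = Finset.univ := by
      ext a; simp [lFin, hA a]
    rw [h1, h2, h3]
    simp [h4]
  | succ k ih =>
    have hsplitQ : (QF S w n).filter (fun u => u.length ≤ k + 1)
        = (QF S w n).filter (fun u => u.length ≤ k)
          ∪ (QF S w n).filter (fun u => u.length = k + 1) := by
      rw [← Finset.filter_or]
      exact Finset.filter_congr fun x _ => by omega
    have hsplitN : (NF S w n).filter (fun v => v.length < k + 1)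
        = (NF S w n).filter (fun v => v.length < k)
          ∪ (NF S w n).filter (fun v => v.length = k) := by
      rw [← Finset.filter_or]
      exact Finset.filter_congr fun x _ => by omega
    have hdQ : Disjoint ((QF S w n).filter (fun u => u.length ≤ k))
        ((QF S w n).filter (fun u => u.length = k + 1)) := by
      refine Finset.disjoint_left.mpr fun x hx hy => ?_
      simp only [Finset.mem_filter] at hx hy; omega
    have hdN : Disjoint ((NF S w n).filter (fun v => v.length < k))
        ((NF S w n).filter (fun v => v.length = k)) := by
      refine Finset.disjoint_left.mpr fun x hx hy => ?_
      simp only [Finset.mem_filter] at hx hy; omega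
    rw [hsplitQ, hsplitN, Finset.sum_union hdQ, Finset.sum_union hdN]
    have hQN : Disjoint ((QF S w n).filter (fun u => u.length = k+1))
        ((NF S w n).filter (fun v => v.length = k+1)) := by
      refine Finset.disjoint_left.mpr fun x hx hy => ?_
      simp only [Finset.mem_filter, mem_QF hS hn, mem_NF hS hn] at hx hy
      exact hy.1.2 hx.1.2.1.isInfix
    have hkey : (∑ u ∈ (QF S w n).filter (fun u => u.length = k+1), (((lFin S u).card : ℤ) - 1))
        + (∑ v ∈ (NF S w n).filter (fun v => v.length = k+1), (((lFin S v).card : ℤ) - 1))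
        = (∑ v ∈ (NF S w n).filter (fun v => v.length = k), (((lFin S v).card : ℤ) - 1))
          + ∑ v ∈ (NF S w n).filter (fun v => v.length = k), mval S v := by
      rw [← Finset.sum_union hQN, children1 hS hn k, Finset.sum_biUnion, ← Finset.sum_add_distrib]
      · refine Finset.sum_congr rfl fun v hv => ?_
        rw [Finset.sum_image (by
          intro x _ y _ hxy
          exact List.append_cancel_left hxy |> fun h => by injection h)]
        exact (mval_eq hS v).symm
      · -- pairwise disjoint images
        intro x hx y hy hxy
        refine Finset.disjoint_left.mpr fun z hz1 hz2 => ?_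
        simp only [Finset.mem_image] at hz1 hz2
        obtain ⟨b1, _, rfl⟩ := hz1
        obtain ⟨b2, _, h2⟩ := hz2
        apply hxy
        have h3 := congrArg List.dropLast h2
        simpa [List.dropLast_concat] using h3.symm
    linarith [ih, hkey]

include hS hw hwne hn in
lemma tele2 : ∀ k : ℕ, w.length ≤ k →
    (((LF S w n).filter (fun u => u.length ≤ k)).card : ℤ)
    + (((QF S w n).filter (fun u => u.length = k)).card : ℤ)
    = 1 + ∑ u ∈ (QF S w n).filter (fun u => u.length < k), (((lFin S u).card : ℤ) - 1) := by
  intro k hk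
  induction k, hk using Nat.le_induction with
  | base =>
    have h1 : (LF S w n).filter (fun u => u.length ≤ w.length) = ∅ := by
      refine Finset.filter_eq_empty_iff.mpr fun u hu => ?_
      rw [mem_LF hS hwne hn] at hu
      have := hu.2.2.2.1; omega
    have h2 : (QF S w n).filter (fun u => u.length = w.length) = {w} := by
      ext x
      simp only [Finset.mem_filter, Finset.mem_singleton, mem_QF hS hn]
      constructor
      · rintro ⟨hx, hl⟩; exact Qset_eq_w hx hl
      · rintro rfl; exact ⟨w_mem_Qset hw hwne, rfl⟩
    have h3 : (QF S w n).filter (fun u => u.length < w.length) = ∅ := by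
      refine Finset.filter_eq_empty_iff.mpr fun u hu => ?_
      rw [mem_QF hS hn] at hu
      have := (Qset_wlen hwne hu).2; omega
    rw [h1, h2, h3]
    simp
  | succ k hk ih =>
    have hsplitL : (LF S w n).filter (fun u => u.length ≤ k + 1)
        = (LF S w n).filter (fun u => u.length ≤ k)
          ∪ (LF S w n).filter (fun u => u.length = k + 1) := by
      rw [← Finset.filter_or]
      exact Finset.filter_congr fun x _ => by omega
    have hsplitQ : (QF S w n).filter (fun u => u.length < k + 1)
        = (QF S w n).filter (fun u => u.length < k)
          ∪ (QF S w n).filter (fun u => u.length = k) := by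
      rw [← Finset.filter_or]
      exact Finset.filter_congr fun x _ => by omega
    have hdL : Disjoint ((LF S w n).filter (fun u => u.length ≤ k))
        ((LF S w n).filter (fun u => u.length = k + 1)) := by
      refine Finset.disjoint_left.mpr fun x hx hy => ?_
      simp only [Finset.mem_filter] at hx hy; omega
    have hdQ : Disjoint ((QF S w n).filter (fun u => u.length < k))
        ((QF S w n).filter (fun u => u.length = k)) := by
      refine Finset.disjoint_left.mpr fun x hx hy => ?_
      simp only [Finset.mem_filter] at hx hy; omega
    have hLQ : Disjoint ((LF S w n).filter (fun u => u.length = k+1))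
        ((QF S w n).filter (fun u => u.length = k+1)) := by
      refine Finset.disjoint_left.mpr fun x hx hy => ?_
      simp only [Finset.mem_filter, mem_QF hS hn, mem_LF hS hwne hn] at hx hy
      exact Lset_not_Qset hwne hx.1 hy.1
    have hcard : (((LF S w n).filter (fun u => u.length = k+1)).card : ℤ)
        + (((QF S w n).filter (fun u => u.length = k+1)).card : ℤ)
        = ∑ u ∈ (QF S w n).filter (fun u => u.length = k), ((lFin S u).card : ℤ) := by
      have := children2 hS hwne hn k hk
      rw [← Nat.cast_add, ← Finset.card_union_of_disjoint hLQ, this, Finset.card_biUnion]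
      · push_cast
        refine Finset.sum_congr rfl fun u hu => ?_
        rw [Finset.card_image_of_injective _ (fun x y h => by injection h)]
      · intro x hx y hy hxy
        refine Finset.disjoint_left.mpr fun z hz1 hz2 => ?_
        simp only [Finset.mem_image] at hz1 hz2
        obtain ⟨a1, _, rfl⟩ := hz1
        obtain ⟨a2, _, h2⟩ := hz2
        injection h2 with h h2t
        exact hxy h2t.symm
    rw [hsplitL, hsplitQ, Finset.sum_union hdQ, Finset.card_union_of_disjoint hdL]
    push_cast
    have hsum : ∑ u ∈ (QF S w n).filter (fun u => u.length = k), (((lFin S u).card : ℤ) - 1)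
        = (∑ u ∈ (QF S w n).filter (fun u => u.length = k), ((lFin S u).card : ℤ))
          - (((QF S w n).filter (fun u => u.length = k)).card : ℤ) := by
      rw [Finset.sum_sub_distrib, Finset.sum_const]; push_cast; ring
    linarith [ih, hcard, hsum]

end Tele
section Key

variable [Fintype A]
variable {S : Set (List A)} {w : List A} {n : ℕ}
variable (hS : Factorial S) (hw : w ∈ S) (hwne : w ≠ [])
variable (hA : ∀ a : A, [a] ∈ S)
variable (hn : ∀ v ∈ S, v.length = n → w <:+: v)

include hS hw hwne hA hn in
lemma key : ((LF S w n).card : ℤ) = (Fintype.card A : ℤ) + ∑ v ∈ NF S w n, mval S v := by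
  have hwn : w.length ≤ n := by
    have := Qset_len hS hn (w_mem_Qset hw hwne); omega
  have t2 := tele2 hS hw hwne hn (n+2) (by omega)
  have t1 := tele1 hS hw hwne hA hn (n+1)
  have e1 : (LF S w n).filter (fun u => u.length ≤ n+2) = LF S w n :=
    Finset.filter_true_of_mem fun x hx => by
      rw [mem_LF hS hwne hn] at hx; have := Lset_len hS hwne hn hx; omega
  have e2 : (QF S w n).filter (fun u => u.length = n+2) = ∅ :=
    Finset.filter_eq_empty_iff.mpr fun u hu => by
      rw [mem_QF hS hn] at hu; have := Qset_len hS hn hu; omega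
  have e3 : (QF S w n).filter (fun u => u.length < n+2) = QF S w n :=
    Finset.filter_true_of_mem fun x hx => by
      rw [mem_QF hS hn] at hx; have := Qset_len hS hn hx; omega
  have e4 : (QF S w n).filter (fun u => u.length ≤ n+1) = QF S w n :=
    Finset.filter_true_of_mem fun x hx => by
      rw [mem_QF hS hn] at hx; have := Qset_len hS hn hx; omega
  have e5 : (NF S w n).filter (fun v => v.length = n+1) = ∅ :=
    Finset.filter_eq_empty_iff.mpr fun u hu => by
      rw [mem_NF hS hn] at hu; have := Nset_len hS hn hu; omega
  have e6 : (NF S w n).filter (fun v => v.length < n+1) = NF S w n :=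
    Finset.filter_true_of_mem fun x hx => by
      rw [mem_NF hS hn] at hx; have := Nset_len hS hn hx; omega
  rw [e1, e2, e3] at t2
  rw [e4, e5, e6] at t1
  simp only [Finset.card_empty, Nat.cast_zero, add_zero, Finset.sum_empty] at t1 t2
  linarith

include hS hwne in
lemma lset_eq : Lset S w = (fun x => w ++ x) '' (firstRet S w) := by
  ext u
  constructor
  · rintro ⟨huS, hpre, hsuf, hlen, hmid⟩
    obtain ⟨x, rfl⟩ := hpre
    refine ⟨x, ⟨⟨mem_of_infix hS huS (List.IsSuffix.isInfix ⟨w, rfl⟩), huS, ?_⟩, ?_⟩, rfl⟩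
    · obtain ⟨y, hy⟩ := hsuf
      refine ⟨y, ?_, hy.symm⟩
      intro h
      have hll := congrArg List.length hy
      rw [h] at hll
      simp only [List.nil_append, List.length_append] at hll
      have hlen' : w.length < w.length + x.length := by simpa using hlen
      omega
    · rintro ⟨y, ⟨hyS, hwyS, y', hy'ne, hy'⟩, z, hzne, rfl⟩
      apply hmid
      have h1 : w ++ (y ++ z) = y' ++ (w ++ z) := by
        rw [← List.append_assoc, hy', List.append_assoc]
      have h2 : (w ++ (y ++ z)).tail.dropLast = (y'.tail ++ w) ++ z.dropLast := by
        rw [h1, List.tail_append_of_ne_nil hy'ne,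
          show y'.tail ++ (w ++ z) = (y'.tail ++ w) ++ z by simp [List.append_assoc],
          List.dropLast_append_of_ne_nil hzne]
      rw [h2]
      exact ⟨y'.tail, z.dropLast, rfl⟩
  · rintro ⟨x, ⟨⟨hxS, hwxS, y, hyne, hy⟩, hmin⟩, rfl⟩
    show w ++ x ∈ Lset S w
    have hxne : x ≠ [] := by
      intro h
      rw [h, List.append_nil] at hy
      have hl := congrArg List.length hy
      simp only [List.length_append] at hl
      exact hyne (List.eq_nil_of_length_eq_zero (by omega))
    have hwpos : 0 < w.length := List.length_pos_iff.mpr hwne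
    have hxpos : 0 < x.length := List.length_pos_iff.mpr hxne
    refine ⟨hwxS, ⟨x, rfl⟩, ⟨y, hy.symm⟩, by simp only [List.length_append]; omega, ?_⟩
    rintro ⟨s, t, hst⟩
    have hune : w ++ x ≠ [] := by simp [hwne]
    have htne : (w ++ x).tail ≠ [] := by
      intro h
      have := congrArg List.length h
      simp [List.length_tail] at this
      omega
    set c := (w ++ x).tail.getLast htne with hc
    have h3 : w ++ x = ((w ++ x).head hune :: s) ++ w ++ (t ++ [c]) := by
      have e1 : (w ++ x).tail = (s ++ w ++ t) ++ [c] := by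
        rw [hst]
        exact (List.dropLast_append_getLast htne).symm
      calc w ++ x = (w ++ x).head hune :: (w ++ x).tail := (List.cons_head_tail hune).symm
        _ = (w ++ x).head hune :: ((s ++ w ++ t) ++ [c]) := by rw [e1]
        _ = ((w ++ x).head hune :: s) ++ w ++ (t ++ [c]) := by simp [List.append_assoc]
    have hp1 : ((w ++ x).head hune :: s) ++ w <+: w ++ x :=
      ⟨t ++ [c], by rw [← List.append_assoc] at h3 ⊢; exact h3.symm⟩
    have hp2 : w <+: w ++ x := ⟨x, rfl⟩
    have hp3 : w <+: ((w ++ x).head hune :: s) ++ w :=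
      List.prefix_of_prefix_length_le hp2 hp1 (by simp only [List.length_append, List.length_cons]; omega)
    obtain ⟨y₀, hy₀⟩ := hp3
    have hmem1 : ((w ++ x).head hune :: s) ++ w ∈ S := mem_of_infix hS hwxS hp1.isInfix
    have hy₀S : y₀ ∈ S := mem_of_infix hS hmem1 (List.IsSuffix.isInfix ⟨w, hy₀⟩)
    apply hmin
    refine ⟨y₀, ⟨hy₀S, by rw [hy₀]; exact hmem1, (w ++ x).head hune :: s, by simp, hy₀⟩,
      t ++ [c], by simp, ?_⟩
    have h4 : w ++ x = (w ++ y₀) ++ (t ++ [c]) := by rw [hy₀]; exact h3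
    rw [List.append_assoc] at h4
    exact List.append_cancel_left h4

include hS hw hwne hA hn in
lemma main_count :
    Cardinal.mk ↥(firstRet S w) = ((LF S w n).card : Cardinal)
    ∧ ((LF S w n).card : ℤ) = (Fintype.card A : ℤ) + ∑ v ∈ NF S w n, mval S v
    ∧ ∀ v ∈ NF S w n, v ∈ S := by
  refine ⟨?_, key hS hw hwne hA hn, fun v hv => ((mem_NF hS hn).mp hv).1⟩
  have hcoe : ((LF S w n : Finset (List A)) : Set (List A)) = Lset S w := by
    ext x
    simp only [Finset.coe_filter, Finset.mem_coe]
    exact mem_LF hS hwne hn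
  have himg : Lset S w = (fun x => w ++ x) '' (firstRet S w) := lset_eq hS hwne
  have hfr : firstRet S w = (fun u => List.drop w.length u) '' (Lset S w) := by
    rw [himg, ← Set.image_comp]
    have hcomp : (fun u => List.drop w.length u) ∘ (fun x => w ++ x) = id := by
      funext x; simp
    rw [hcomp, Set.image_id]
  have hfin : (firstRet S w).Finite := by
    rw [hfr, ← hcoe]
    exact ((LF S w n).finite_toSet).image _
  have hn1 : (firstRet S w).ncard = (LF S w n).card := by
    have h5 : (Lset S w).ncard = (firstRet S w).ncard := by
      rw [himg]
      exact Set.ncard_image_of_injective _ (fun x y h => List.append_cancel_left h)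
    rw [← h5, ← hcoe, Set.ncard_coe_finset]
  obtain ⟨F, hF⟩ : ∃ F : Finset (List A), ↑F = firstRet S w := ⟨hfin.toFinset, hfin.coe_toFinset⟩
  have hmk : Cardinal.mk ↥(firstRet S w) = (F.card : Cardinal) := by
    rw [← hF]; exact Cardinal.mk_coe_finset
  rw [← hF, Set.ncard_coe_finset] at hn1
  rw [hmk, hn1]

end Key

lemma firstRet_nil [Fintype A] {S : Set (List A)} (hS : Factorial S) (hA : ∀ a : A, [a] ∈ S) :
    firstRet S ([] : List A) = Set.range (fun a : A => [a]) := by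
  ext x
  simp only [firstRet, retWords, Set.mem_setOf_eq, Set.mem_range, List.nil_append,
    List.append_nil]
  constructor
  · rintro ⟨⟨hxS, _, y, hyne, hy⟩, hmin⟩
    have hxne : x ≠ [] := by rw [hy]; exact hyne
    cases x with
    | nil => exact absurd rfl hxne
    | cons a t =>
      cases t with
      | nil => exact ⟨a, rfl⟩
      | cons b t' =>
        exfalso
        apply hmin
        refine ⟨[a], ⟨?_, ?_, [a], by simp, rfl⟩, b :: t', by simp, rfl⟩
        · exact mem_of_infix hS hxS ⟨[], b :: t', rfl⟩
        · exact mem_of_infix hS hxS ⟨[], b :: t', rfl⟩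
  · rintro ⟨a, rfl⟩
    refine ⟨⟨hA a, hA a, [a], by simp, rfl⟩, ?_⟩
    rintro ⟨y, ⟨hyS, _, y', hy'ne, hy'⟩, z, hzne, hxyz⟩
    have hyne : y ≠ [] := by rw [hy']; exact hy'ne
    have := congrArg List.length hxyz
    simp only [List.length_cons, List.length_nil, List.length_append] at this
    have h1 : 0 < y.length := List.length_pos_iff.mpr hyne
    have h2 : 0 < z.length := List.length_pos_iff.mpr hzne
    omega

end Stmt6

/-- In a uniformly recurrent set containing the alphabet: if `S` is strong
(resp. weak, resp. neutral) then every set of first right return words has at least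
(resp. at most, resp. exactly) `Card A` elements. -/
theorem statement6 {A : Type*} [Fintype A] (S : Set (List A)) (hur : UnifRecurrent S)
    (hA : ∀ a : A, [a] ∈ S) (w : List A) (hw : w ∈ S) :
    (SStrong S → (Fintype.card A : Cardinal) ≤ Cardinal.mk ↥(firstRet S w)) ∧
    (SWeak S → Cardinal.mk ↥(firstRet S w) ≤ (Fintype.card A : Cardinal)) ∧
    (SNeutral S → Cardinal.mk ↥(firstRet S w) = (Fintype.card A : Cardinal)) := by
  by_cases hwe : w = []
  · subst hwe
    have hmk : Factorial S →
        Cardinal.mk ↥(firstRet S ([] : List A)) = (Fintype.card A : Cardinal) := by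
      intro hS
      rw [Stmt6.firstRet_nil hS hA, Cardinal.mk_range_eq _ (fun a b h => by injection h),
        Cardinal.mk_fintype]
    exact ⟨fun h => (hmk h.1).ge, fun h => (hmk h.1).le, fun h => hmk h.1⟩
  · obtain ⟨n, hn1, hn2⟩ := hur.2 w hw
    have hn : ∀ v ∈ S, v.length = n → w <:+: v := fun v hv hl =>
      Stmt6.isFactor_iff_infix.mp (hn2 v hv hl)
    refine ⟨fun h => ?_, fun h => ?_, fun h => ?_⟩
    · obtain ⟨hmk, hkey, hmem⟩ := Stmt6.main_count h.1 hw hwe hA hn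
      have hsum : 0 ≤ ∑ v ∈ Stmt6.NF S w n, mval S v :=
        Finset.sum_nonneg fun v hv => h.2 v (hmem v hv)
      have hle : Fintype.card A ≤ (Stmt6.LF S w n).card := by
        have : (Fintype.card A : ℤ) ≤ ((Stmt6.LF S w n).card : ℤ) := by linarith
        exact_mod_cast this
      rw [hmk]
      exact Nat.cast_le.mpr hle
    · obtain ⟨hmk, hkey, hmem⟩ := Stmt6.main_count h.1 hw hwe hA hn
      have hsum : ∑ v ∈ Stmt6.NF S w n, mval S v ≤ 0 :=
        Finset.sum_nonpos fun v hv => h.2 v (hmem v hv)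
      have hle : (Stmt6.LF S w n).card ≤ Fintype.card A := by
        have : ((Stmt6.LF S w n).card : ℤ) ≤ (Fintype.card A : ℤ) := by linarith
        exact_mod_cast this
      rw [hmk]
      exact Nat.cast_le.mpr hle
    · obtain ⟨hmk, hkey, hmem⟩ := Stmt6.main_count h.1 hw hwe hA hn
      have hsum : ∑ v ∈ Stmt6.NF S w n, mval S v = 0 :=
        Finset.sum_eq_zero fun v hv => h.2 v (hmem v hv)
      have hle : (Stmt6.LF S w n).card = Fintype.card A := by
        have : ((Stmt6.LF S w n).card : ℤ) = (Fintype.card A : ℤ) := by linarith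
        exact_mod_cast this
      rw [hmk, hle]
end
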